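/- arXiv:2601.15680 — 5 statements merged into one kernel-verified Lean document; each statement's English description precedes it below -/
import Mathlib

section
/- Let p ≥ 5 be a prime and let r be an integer with 1 ≤ r ≤ p-1 such that r is a quadratic non-residue modulo p. Then for all integers n ≥ 0 and all integers k ≥ j ≥ 0, a_{p(k-j)+(p-1), pk+(p-2)}(pn+r) ≡ 0 (mod p). -/
namespace Stmt9
open Polynomial Finset

noncomputable def Bz : ℕ → ℤ → Polynomial ℤ
  | 0, i => if i = 0 then 1 else 0
  | n+1, i => Bz n (i-1) + X ^ (2*i).toNat * Bz n i

lemma Bz_zero_def (i : ℤ) : Bz 0 i = if i = 0 then 1 else 0 := by rw [Bz]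
lemma Bz_succ (n : ℕ) (i : ℤ) : Bz (n+1) i = Bz n (i-1) + X ^ (2*i).toNat * Bz n i := by rw [Bz]

lemma Bz_neg : ∀ (n : ℕ) (i : ℤ), i < 0 → Bz n i = 0
  | 0, i, h => by rw [Bz_zero_def]; exact if_neg (by omega)
  | n+1, i, h => by rw [Bz_succ, Bz_neg n _ (by omega), Bz_neg n _ h]; ring

lemma Bz_gt : ∀ (n : ℕ) (i : ℤ), (n : ℤ) < i → Bz n i = 0
  | 0, i, h => by rw [Bz_zero_def]; exact if_neg (by omega)
  | n+1, i, h => by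
      rw [Bz_succ, Bz_gt n _ (by omega), Bz_gt n _ (by omega)]; ring

lemma Bz_zero : ∀ n : ℕ, Bz n 0 = 1
  | 0 => by rw [Bz_zero_def]; simp
  | n+1 => by rw [Bz_succ, Bz_neg n _ (by omega), Bz_zero n]; simp

lemma Bz_pascal2 : ∀ (n : ℕ) (i : ℤ), Bz (n+1) i = X ^ (2*((n:ℤ)+1-i)).toNat * Bz n (i-1) + Bz n i := by
  intro n
  induction n with
  | zero =>
    intro i
    rcases lt_trichotomy i 0 with h|rfl|h
    · rw [Bz_neg 1 i h, Bz_neg 0 _ (by omega), Bz_neg 0 _ h]; simp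
    · rw [Bz_zero, Bz_zero, Bz_neg 0 _ (by omega)]; simp
    rcases eq_or_lt_of_le (show (1:ℤ) ≤ i by omega) with rfl|h1
    · norm_num [Bz_succ, Bz_zero_def]
    · rw [Bz_gt 1 i (by exact_mod_cast h1), Bz_gt 0 _ (by omega), Bz_gt 0 _ (by omega)]; simp
  | succ n ih =>
    intro i
    have hc : ((n:ℤ)+1-(i-1)) = ((n+1:ℕ):ℤ)+1-i := by push_cast; ring
    have key : X ^ (2*i).toNat * (X ^ (2*((n:ℤ)+1-i)).toNat * Bz n (i-1))
        = X ^ (2*(((n+1:ℕ):ℤ)+1-i)).toNat * (X ^ (2*(i-1)).toNat * Bz n (i-1)) := by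
      by_cases hz : Bz n (i-1) = 0
      · rw [hz]; ring
      · have h1 : 0 ≤ i - 1 := le_of_not_gt (fun h => hz (Bz_neg _ _ h))
        have h2 : i - 1 ≤ (n:ℤ) := le_of_not_gt (fun h => hz (Bz_gt _ _ (by omega)))
        rw [← mul_assoc, ← mul_assoc, ← pow_add, ← pow_add]
        congr 2
        push_cast
        omega
    conv_lhs => rw [show n+1+1 = (n+1)+1 from rfl, Bz_succ (n+1) i, ih (i-1), ih i, hc]
    conv_rhs => rw [Bz_succ n (i-1), Bz_succ n i]
    linear_combination key




lemma Bz_double (n : ℕ) (i : ℤ) (h0 : 0 ≤ i) (h2 : i ≤ (n:ℤ)+2) :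
    Bz (n+2) i = X ^ (2*((n:ℤ)+2-i)).toNat * Bz n (i-2)
      + (1 + X ^ (2*(n+1))) * Bz n (i-1) + X ^ (2*i).toNat * Bz n i := by
  have e1 : Bz (n+2) i = Bz (n+1) (i-1) + X ^ (2*i).toNat * Bz (n+1) i := Bz_succ (n+1) i
  rw [e1, Bz_pascal2 n (i-1), Bz_pascal2 n i]
  have hc : ((n:ℤ)+1-(i-1)) = (n:ℤ)+2-i := by ring
  have hc2 : (i-1-1 : ℤ) = i-2 := by ring
  rw [hc, hc2]
  have key : X ^ (2*i).toNat * (X ^ (2*((n:ℤ)+1-i)).toNat * Bz n (i-1))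
      = X ^ (2*(n+1)) * Bz n (i-1) := by
    by_cases hz : Bz n (i-1) = 0
    · rw [hz]; ring
    · have h1 : 0 ≤ i - 1 := le_of_not_gt (fun h => hz (Bz_neg _ _ h))
      have hb : i - 1 ≤ (n:ℤ) := le_of_not_gt (fun h => hz (Bz_gt _ _ (by omega)))
      rw [← mul_assoc, ← pow_add]
      congr 2
      omega
  linear_combination key

/-- `PP a b = ∏_{m=a+1}^{a+b} (1 - X^{2m})`. -/
noncomputable def PP (a b : ℕ) : Polynomial ℤ := ∏ m ∈ Finset.range b, (1 - X ^ (2*(a+m+1)))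

lemma PP_succ (a b : ℕ) : PP a (b+1) = PP a b * (1 - X ^ (2*(a+b+1))) := Finset.prod_range_succ _ _

lemma PP_succ' (a b : ℕ) : PP a (b+1) = (1 - X ^ (2*(a+1))) * PP (a+1) b := by
  rw [PP, Finset.prod_range_succ', mul_comm]
  congr 1
  rw [PP]
  apply Finset.prod_congr rfl
  intro m _
  have : a+(m+1)+1 = a+1+m+1 := by omega
  rw [this]

lemma PP_add (a b c : ℕ) : PP a (b+c) = PP a b * PP (a+b) c := by
  rw [PP, Finset.prod_range_add, PP, PP]
  congr 1
  apply Finset.prod_congr rfl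
  intro m _
  have : a+(b+m)+1 = a+b+m+1 := by omega
  rw [this]

lemma Bz_poch : ∀ (n i : ℕ), i ≤ n → Bz n (i:ℤ) * PP 0 i = PP (n-i) i := by
  intro n
  induction n with
  | zero =>
    intro i hi
    interval_cases i
    simp [Bz_zero, PP]
  | succ n ih =>
    intro i hi
    match i with
    | 0 => simp [Bz_zero, PP]
    | (i+1) =>
      have hdef : Bz (n+1) ((i:ℤ)+1) = Bz n (i:ℤ) + X ^ (2*(i+1)) * Bz n ((i:ℤ)+1) := by
        rw [Bz_succ]
        have h1 : ((i:ℤ)+1-1) = (i:ℤ) := by ring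
        have h2 : (2*((i:ℤ)+1)).toNat = 2*(i+1) := by omega
        rw [h1, h2]
      push_cast
      rw [hdef, PP_succ 0 i]
      rcases eq_or_lt_of_le hi with heq|hlt
      · -- i = n
        have hin : i = n := by omega
        subst hin
        have hgt : Bz i ((i:ℤ)+1) = 0 := Bz_gt i ((i:ℤ)+1) (by omega)
        have ihi := ih i le_rfl
        rw [Nat.sub_self] at ihi
        rw [hgt]
        have hgoal : (Bz i (i:ℤ) + X ^ (2*(i+1)) * 0) * (PP 0 i * (1 - X ^ (2*(0+i+1))))
            = PP 0 (i+1) := by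
          rw [PP_succ 0 i]
          linear_combination (1 - X ^ (2*(0+i+1))) * ihi
        rw [hgoal, Nat.sub_self]
      · -- i + 1 ≤ n
        have hin : i + 1 ≤ n := by omega
        have ih1 := ih i (by omega)
        have ih2 := ih (i+1) hin
        push_cast at ih2
        have hsplit : PP (n-(i+1)) (i+1) = (1 - X ^ (2*(n-i))) * PP (n-i) i := by
          have h3 : n - (i+1) + 1 = n - i := by omega
          rw [PP_succ', h3]
        have hx : (X : Polynomial ℤ) ^ (2*(i+1)) * X ^ (2*(n-i)) = X ^ (2*(n+1)) := by
          rw [← pow_add]; congr 1; omega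
        have htarget : PP (n-i) (i+1) = PP (n-i) i * (1 - X ^ (2*(n+1))) := by
          have h2 : (n-i) + i + 1 = n + 1 := by omega
          rw [PP_succ, h2]
        rw [htarget]
        calc (Bz n (i:ℤ) + X ^ (2*(i+1)) * Bz n ((i:ℤ)+1)) * (PP 0 i * (1 - X ^ (2*(0+i+1))))
            = (Bz n (i:ℤ) * PP 0 i) * (1 - X ^ (2*(0+i+1)))
              + X ^ (2*(i+1)) * ((Bz n ((i:ℤ)+1) * (PP 0 i * (1 - X ^ (2*(0+i+1)))))) := by ring
          _ = PP (n-i) i * (1 - X ^ (2*(0+i+1)))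
              + X ^ (2*(i+1)) * PP (n-(i+1)) (i+1) := by
              rw [ih1, ← PP_succ 0 i, ih2]
          _ = PP (n-i) i * (1 - X ^ (2*(n+1))) := by
              rw [hsplit, show 2*(0+i+1) = 2*(i+1) from by omega]
              linear_combination (-(PP (n-i) i)) * hx
noncomputable def gTerm (M : ℕ) (j : ℤ) : Polynomial ℤ :=
  C ((Int.negOnePow j : ℤ)) * X ^ (j.natAbs^2) * Bz (2*M) ((M:ℤ) + j)

lemma gTerm_vanish (M : ℕ) (j : ℤ) (h : j < -(M:ℤ) ∨ (M:ℤ) < j) : gTerm M j = 0 := by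
  rcases h with h|h
  · rw [gTerm, Bz_neg (2*M) _ (by omega), mul_zero]
  · rw [gTerm, Bz_gt (2*M) _ (by push_cast; omega), mul_zero]

lemma sum_gTerm (M : ℕ) (a b : ℤ) (ha : a ≤ -(M:ℤ)) (hb : (M:ℤ) ≤ b) :
    ∑ j ∈ Finset.Icc a b, gTerm M j = ∑ j ∈ Finset.Icc (-(M:ℤ)) M, gTerm M j := by
  refine (Finset.sum_subset (Finset.Icc_subset_Icc ha hb) ?_).symm
  intro x hx hnx
  rw [Finset.mem_Icc] at hx hnx
  exact gTerm_vanish M x (by omega)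

lemma sum_shift (f : ℤ → Polynomial ℤ) (a b c : ℤ) :
    ∑ j ∈ Finset.Icc a b, f (j + c) = ∑ j ∈ Finset.Icc (a+c) (b+c), f j := by
  refine Finset.sum_nbij' (fun j => j + c) (fun j => j - c) ?_ ?_ ?_ ?_ ?_ <;>
    intros <;> simp_all [Finset.mem_Icc] <;> omega

lemma arith1 (M : ℕ) (j : ℤ) (h : j ≤ (M:ℤ)+1) :
    j.natAbs^2 + (2*((M:ℤ)+1-j)).toNat = (j-1).natAbs^2 + (2*M+1) := by
  have e1 : ((j.natAbs^2 : ℕ) : ℤ) = j^2 := by rw [Nat.cast_pow, Int.natAbs_sq]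
  have e2 : (((j-1).natAbs^2 : ℕ) : ℤ) = (j-1)^2 := by rw [Nat.cast_pow, Int.natAbs_sq]
  have e3 : (((2*((M:ℤ)+1-j)).toNat : ℕ) : ℤ) = 2*((M:ℤ)+1-j) := Int.toNat_of_nonneg (by omega)
  have : ((j.natAbs^2 + (2*((M:ℤ)+1-j)).toNat : ℕ) : ℤ) = (((j-1).natAbs^2 + (2*M+1) : ℕ) : ℤ) := by
    rw [Nat.cast_add, Nat.cast_add, e1, e2, e3]
    push_cast
    ring
  exact_mod_cast this

lemma arith3 (M : ℕ) (j : ℤ) (h : -(M:ℤ)-1 ≤ j) :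
    j.natAbs^2 + (2*((M:ℤ)+1+j)).toNat = (j+1).natAbs^2 + (2*M+1) := by
  have e1 : ((j.natAbs^2 : ℕ) : ℤ) = j^2 := by rw [Nat.cast_pow, Int.natAbs_sq]
  have e2 : (((j+1).natAbs^2 : ℕ) : ℤ) = (j+1)^2 := by rw [Nat.cast_pow, Int.natAbs_sq]
  have e3 : (((2*((M:ℤ)+1+j)).toNat : ℕ) : ℤ) = 2*((M:ℤ)+1+j) := Int.toNat_of_nonneg (by omega)
  have : ((j.natAbs^2 + (2*((M:ℤ)+1+j)).toNat : ℕ) : ℤ) = (((j+1).natAbs^2 + (2*M+1) : ℕ) : ℤ) := by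
    rw [Nat.cast_add, Nat.cast_add, e1, e2, e3]
    push_cast
    ring
  exact_mod_cast this

lemma gTerm_expand (M : ℕ) (j : ℤ) (h1 : -(M:ℤ)-1 ≤ j) (h2 : j ≤ (M:ℤ)+1) :
    gTerm (M+1) j = -(X^(2*M+1) * gTerm M (j-1)) + (1 + X^(2*(2*M+1))) * gTerm M j
      - X^(2*M+1) * gTerm M (j+1) := by
  have hBd := Bz_double (2*M) ((M:ℤ)+1+j) (by omega) (by push_cast; omega)
  have hcast : gTerm (M+1) j = C ((Int.negOnePow j : ℤ)) * X ^ (j.natAbs^2) * Bz (2*M+2) ((M:ℤ)+1+j) := by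
    rw [gTerm]
    have e : 2*(M+1) = 2*M+2 := by omega
    rw [e]
    have e2 : ((M+1:ℕ):ℤ) + j = (M:ℤ)+1+j := by push_cast; ring
    rw [e2]
  rw [hcast, hBd]
  have ha1 : (M:ℤ)+1+j-2 = (M:ℤ)+(j-1) := by ring
  have ha2 : (M:ℤ)+1+j-1 = (M:ℤ)+j := by ring
  have ha3 : (2*(((2*M:ℕ):ℤ)+2-((M:ℤ)+1+j))) = 2*((M:ℤ)+1-j) := by push_cast; ring
  rw [ha1, ha2, ha3]
  have hs1 : (Int.negOnePow j : ℤ) = -(Int.negOnePow (j-1) : ℤ) := by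
    rw [show j = (j-1)+1 by ring, Int.negOnePow_succ]
    push_cast
    ring
  have hs3 : (Int.negOnePow j : ℤ) = -(Int.negOnePow (j+1) : ℤ) := by
    rw [Int.negOnePow_succ]
    push_cast
    ring
  have hp1 : (X : Polynomial ℤ) ^ (j.natAbs^2) * X ^ ((2*((M:ℤ)+1-j)).toNat)
      = X ^ ((j-1).natAbs^2) * X ^ (2*M+1) := by
    rw [← pow_add, ← pow_add, arith1 M j h2]
  have hp3 : (X : Polynomial ℤ) ^ (j.natAbs^2) * X ^ ((2*((M:ℤ)+1+j)).toNat)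
      = X ^ ((j+1).natAbs^2) * X ^ (2*M+1) := by
    rw [← pow_add, ← pow_add, arith3 M j h1]
  have hBzarg : (M:ℤ)+1+j = (M:ℤ)+(j+1) := by ring
  have hs13 : (Int.negOnePow (j+1) : ℤ) = (Int.negOnePow (j-1) : ℤ) := by
    rw [show j+1 = (j-1)+1+1 by ring, Int.negOnePow_succ, Int.negOnePow_succ]
    push_cast
    ring
  rw [gTerm, gTerm, gTerm, hs1, hs13]
  rw [hBzarg] at hp3 ⊢
  push_cast [map_neg]
  linear_combination (-(Bz (2*M) ((M:ℤ)+(j-1)) * C ((Int.negOnePow (j-1) : ℤ)))) * hp1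
    + (-(Bz (2*M) ((M:ℤ)+(j+1)) * C ((Int.negOnePow (j-1) : ℤ)))) * hp3

lemma theta (M : ℕ) :
    ∏ m ∈ Finset.range M, (1 - X^(2*m+1))^2 = ∑ j ∈ Finset.Icc (-(M:ℤ)) M, gTerm M j := by
  induction M with
  | zero =>
    simp [gTerm, Bz_zero]
  | succ M ih =>
    rw [Finset.prod_range_succ, ih]
    have hIcc : Finset.Icc (-((M+1:ℕ):ℤ)) ((M+1:ℕ):ℤ) = Finset.Icc (-(M:ℤ)-1) ((M:ℤ)+1) := by
      congr 1 <;> push_cast <;> ring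
    rw [hIcc]
    have hexp : ∑ j ∈ Finset.Icc (-(M:ℤ)-1) ((M:ℤ)+1), gTerm (M+1) j
        = ∑ j ∈ Finset.Icc (-(M:ℤ)-1) ((M:ℤ)+1),
            (-(X^(2*M+1) * gTerm M (j-1)) + (1 + X^(2*(2*M+1))) * gTerm M j
              - X^(2*M+1) * gTerm M (j+1)) := by
      refine Finset.sum_congr rfl (fun j hj => ?_)
      rw [Finset.mem_Icc] at hj
      exact gTerm_expand M j hj.1 hj.2
    rw [hexp, Finset.sum_sub_distrib, Finset.sum_add_distrib]
    have T1 : ∑ j ∈ Finset.Icc (-(M:ℤ)-1) ((M:ℤ)+1), gTerm M (j-1)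
        = ∑ j ∈ Finset.Icc (-(M:ℤ)) M, gTerm M j := by
      have hs := sum_shift (gTerm M) (-(M:ℤ)-1) ((M:ℤ)+1) (-1)
      simp only [← sub_eq_add_neg] at hs
      rw [hs]
      exact sum_gTerm M _ _ (by omega) (by omega)
    have T3 : ∑ j ∈ Finset.Icc (-(M:ℤ)-1) ((M:ℤ)+1), gTerm M (j+1)
        = ∑ j ∈ Finset.Icc (-(M:ℤ)) M, gTerm M j := by
      rw [sum_shift (gTerm M) (-(M:ℤ)-1) ((M:ℤ)+1) 1]
      exact sum_gTerm M _ _ (by omega) (by omega)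
    have T2 : ∑ j ∈ Finset.Icc (-(M:ℤ)-1) ((M:ℤ)+1), (1 + X^(2*(2*M+1))) * gTerm M j
        = (1 + X^(2*(2*M+1))) * ∑ j ∈ Finset.Icc (-(M:ℤ)) M, gTerm M j := by
      rw [← Finset.mul_sum]
      rw [sum_gTerm M _ _ (by omega) (by omega)]
    have Tneg : ∑ j ∈ Finset.Icc (-(M:ℤ)-1) ((M:ℤ)+1), -(X^(2*M+1) * gTerm M (j-1))
        = -(X^(2*M+1) * ∑ j ∈ Finset.Icc (-(M:ℤ)) M, gTerm M j) := by
      rw [Finset.sum_neg_distrib, ← Finset.mul_sum, T1]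
    have Tpos : ∑ j ∈ Finset.Icc (-(M:ℤ)-1) ((M:ℤ)+1), X^(2*M+1) * gTerm M (j+1)
        = X^(2*M+1) * ∑ j ∈ Finset.Icc (-(M:ℤ)) M, gTerm M j := by
      rw [← Finset.mul_sum, T3]
    rw [Tneg, T2, Tpos]
    have hxp : (X : Polynomial ℤ)^(2*(2*M+1)) = X^(2*M+1) * X^(2*M+1) := by
      rw [← pow_add]
      congr 1
      omega
    rw [hxp]
    ring

lemma coeff_mul_one_sub (f : Polynomial ℤ) (c d : ℕ) (h : d < c) :
    (f * (1 - X^c)).coeff d = f.coeff d := by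
  rw [mul_sub, mul_one, Polynomial.coeff_sub, Polynomial.coeff_mul_X_pow', if_neg (by omega)]
  ring

lemma coeff_mul_prod_one_sub {ι : Type*} (s : Finset ι) (c : ι → ℕ) (f : Polynomial ℤ) (d : ℕ)
    (h : ∀ i ∈ s, d < c i) :
    (f * ∏ i ∈ s, (1 - X^(c i))).coeff d = f.coeff d := by
  classical
  induction s using Finset.cons_induction with
  | empty => rw [Finset.prod_empty, mul_one]
  | cons i s his ih =>
    rw [Finset.prod_cons, show f * ((1 - X^(c i)) * ∏ j ∈ s, (1 - X^(c j)))
      = (f * ∏ j ∈ s, (1 - X^(c j))) * (1 - X^(c i)) by ring]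
    rw [coeff_mul_one_sub _ _ _ (h i (Finset.mem_cons_self i s))]
    exact ih (fun j hj => h j (Finset.mem_cons_of_mem hj))

lemma coeff_mul_PP (f : Polynomial ℤ) (a b d : ℕ) (h : d < 2*(a+1)) :
    (f * PP a b).coeff d = f.coeff d := by
  rw [PP]
  exact coeff_mul_prod_one_sub _ _ _ _ (fun i _ => by omega)

lemma coeff_theta_term (M i : ℕ) (hi : i ≤ 2*M) (d : ℕ) (hd1 : d < 2*(i+1)) (hd2 : d < 2*(2*M-i+1)) :
    (Bz (2*M) (i:ℤ) * PP 0 (2*M)).coeff d = if d = 0 then 1 else 0 := by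
  have hPP : PP 0 (2*M) = PP 0 i * PP i (2*M - i) := by
    have h := PP_add 0 i (2*M - i)
    rw [Nat.zero_add, show i + (2*M - i) = 2*M by omega] at h
    exact h
  have hre : Bz (2*M) (i:ℤ) * PP 0 (2*M) = (1 * PP (2*M-i) i) * PP i (2*M - i) := by
    rw [hPP, ← mul_assoc, Bz_poch (2*M) i hi, one_mul]
  rw [hre, coeff_mul_PP _ _ _ _ hd1, coeff_mul_PP _ _ _ _ (by omega), Polynomial.coeff_one]

lemma key_theta_coeff (M a : ℕ) (hns : ∀ t : ℕ, t^2 ≠ a) (hM : 2*a + 2 ≤ M) :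
    ((∏ m ∈ Finset.range M, (1 - X^(2*m+1))^2) * PP 0 (2*M)).coeff a = 0 := by
  rw [theta, Finset.sum_mul, Polynomial.finset_sum_coeff]
  apply Finset.sum_eq_zero
  intro j hj
  rw [Finset.mem_Icc] at hj
  set i : ℕ := ((M:ℤ)+j).toNat with hidef
  have hiz : ((i:ℕ) : ℤ) = (M:ℤ) + j := Int.toNat_of_nonneg (by omega)
  set t : ℕ := j.natAbs with htdef
  have hre : gTerm M j * PP 0 (2*M)
      = C ((Int.negOnePow j : ℤ)) * ((Bz (2*M) ((i:ℕ):ℤ) * PP 0 (2*M)) * X ^ (t^2)) := by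
    rw [gTerm, hiz]
    ring
  rw [hre, Polynomial.coeff_C_mul, Polynomial.coeff_mul_X_pow']
  by_cases hle : t^2 ≤ a
  · rw [if_pos hle]
    have hta : t ≤ a := by
      have := Nat.le_self_pow (two_ne_zero) t
      omega
    have hiM : (i:ℤ) = (M:ℤ) + j := hiz
    have htabs : (t:ℤ) = |j| := by rw [htdef]; exact (Int.abs_eq_natAbs j).symm
    have hi2M : i ≤ 2*M := by omega
    rw [coeff_theta_term M i hi2M _ (by omega) (by omega)]
    rw [if_neg (by
      intro h0
      exact hns t (by omega))]
    ring
  · rw [if_neg hle]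
    ring

lemma key_poly (N a : ℕ) (haN : a ≤ N) (hns : ∀ t : ℕ, t^2 ≠ a) :
    (∏ m ∈ Finset.range (N+1), ((1 - X^(2*m+1))^2 * (1 - X^(2*m+2)) : Polynomial ℤ)).coeff a = 0 := by
  set M := N + 2*a + 2 with hMdef
  have hsplit : ∏ m ∈ Finset.range (N+1), ((1 - X^(2*m+1))^2 * (1 - X^(2*m+2)) : Polynomial ℤ)
      = (∏ m ∈ Finset.range (N+1), ((1 - X^(2*m+1))^2 : Polynomial ℤ)) * PP 0 (N+1) := by
    rw [Finset.prod_mul_distrib]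
    congr 1
    rw [PP]
    apply Finset.prod_congr rfl
    intro m _
    rw [show 2*(0+m+1) = 2*m+2 by omega]
  have hbig1 : ∏ m ∈ Finset.range M, ((1 - X^(2*m+1))^2 : Polynomial ℤ)
      = (∏ m ∈ Finset.range (N+1), ((1 - X^(2*m+1))^2 : Polynomial ℤ))
        * (∏ m ∈ Finset.range (M-(N+1)), ((1 - X^(2*((N+1)+m)+1)) : Polynomial ℤ))^2 := by
    rw [← Finset.prod_pow, ← Finset.prod_range_add, show (N+1) + (M - (N+1)) = M by omega]
  have hbig2 : PP 0 (2*M) = PP 0 (N+1) * PP (N+1) (2*M - (N+1)) := by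
    have h := PP_add 0 (N+1) (2*M - (N+1))
    rw [Nat.zero_add, show (N+1) + (2*M - (N+1)) = 2*M by omega] at h
    exact h
  have h0 := key_theta_coeff M a hns (by omega)
  rw [hbig1, hbig2] at h0
  have step1 : ∀ f : Polynomial ℤ, (f * PP (N+1) (2*M-(N+1))).coeff a = f.coeff a :=
    fun f => coeff_mul_PP f (N+1) _ a (by omega)
  have step2 : ∀ f : Polynomial ℤ,
      (f * ∏ m ∈ Finset.range (M-(N+1)), ((1 - X^(2*((N+1)+m)+1)) : Polynomial ℤ)).coeff a
        = f.coeff a :=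
    fun f => coeff_mul_prod_one_sub _ _ f a (fun i _ => by omega)
  have hre : (∏ m ∈ Finset.range (N+1), ((1 - X^(2*m+1))^2 : Polynomial ℤ))
        * (∏ m ∈ Finset.range (M-(N+1)), ((1 - X^(2*((N+1)+m)+1)) : Polynomial ℤ))^2
        * (PP 0 (N+1) * PP (N+1) (2*M - (N+1)))
      = ((((∏ m ∈ Finset.range (N+1), ((1 - X^(2*m+1))^2 : Polynomial ℤ)) * PP 0 (N+1))
          * ∏ m ∈ Finset.range (M-(N+1)), ((1 - X^(2*((N+1)+m)+1)) : Polynomial ℤ))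
          * ∏ m ∈ Finset.range (M-(N+1)), ((1 - X^(2*((N+1)+m)+1)) : Polynomial ℤ))
        * PP (N+1) (2*M - (N+1)) := by
    ring
  rw [hre, step1, step2, step2] at h0
  rw [hsplit]
  exact h0

section PS
open PowerSeries

noncomputable def V (R : Type*) [CommRing R] (c : ℕ) : PowerSeries R :=
  PowerSeries.invOfUnit (1 - PowerSeries.X^c) 1

lemma constCoeff_one_sub (R : Type*) [CommRing R] (c : ℕ) (hc : 0 < c) :
    PowerSeries.constantCoeff (R := R) (1 - PowerSeries.X^c) = 1 := by
  rw [map_sub, map_one, map_pow, PowerSeries.constantCoeff_X, zero_pow hc.ne', sub_zero]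

lemma V_mul (R : Type*) [CommRing R] (c : ℕ) (hc : 0 < c) :
    (1 - PowerSeries.X^c) * V R c = 1 :=
  PowerSeries.mul_invOfUnit _ _ (by rw [constCoeff_one_sub R c hc, Units.val_one])

lemma inv_unique {R : Type*} [CommRing R] (f a b : PowerSeries R)
    (ha : f * a = 1) (hb : f * b = 1) : a = b := by
  calc a = a * (f * b) := by rw [hb, mul_one]
  _ = (f * a) * b := by ring
  _ = b := by rw [ha, one_mul]

lemma V_map {R S : Type*} [CommRing R] [CommRing S] (φ : R →+* S) (c : ℕ) (hc : 0 < c) :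
    PowerSeries.map φ (V R c) = V S c := by
  apply inv_unique (1 - PowerSeries.X^c) _ _ _ (V_mul S c hc)
  have h := congrArg (PowerSeries.map φ) (V_mul R c hc)
  rw [map_mul, map_sub, map_one, map_pow, PowerSeries.map_X] at h
  exact h

variable (p : ℕ) [Fact p.Prime]

lemma charPS : CharP (PowerSeries (ZMod p)) p :=
  charP_of_injective_ringHom (PowerSeries.C_injective) p

lemma one_sub_pow_char (c : ℕ) :
    ((1 : PowerSeries (ZMod p)) - PowerSeries.X^c)^p = 1 - PowerSeries.X^(p*c) := by
  haveI := charPS p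
  rw [sub_pow_char, one_pow, ← pow_mul, Nat.mul_comm c p]

lemma V_pow_p (c : ℕ) (hc : 0 < c) : (V (ZMod p) c)^p = V (ZMod p) (p*c) := by
  have hp : 0 < p := (Fact.out : p.Prime).pos
  apply inv_unique (1 - PowerSeries.X^(p*c)) _ _ _ (V_mul _ _ (by positivity))
  have h := congrArg (·^p) (V_mul (ZMod p) c hc)
  simp only [mul_pow, one_pow] at h
  rw [one_sub_pow_char] at h
  exact h

lemma V_pow_sub1 (c : ℕ) (hc : 0 < c) :
    V (ZMod p) c ^ (p-1) = V (ZMod p) (p*c) * (1 - PowerSeries.X^c) := by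
  have hp : 2 ≤ p := (Fact.out : p.Prime).two_le
  have h := V_mul (ZMod p) c hc
  calc V (ZMod p) c ^ (p-1) = V (ZMod p) c ^ (p-1) * ((1 - PowerSeries.X^c) * V (ZMod p) c) := by
        rw [h, mul_one]
    _ = (V (ZMod p) c ^ (p-1) * V (ZMod p) c) * (1 - PowerSeries.X^c) := by ring
    _ = V (ZMod p) c ^ p * (1 - PowerSeries.X^c) := by rw [← pow_succ]; congr 2; omega
    _ = V (ZMod p) (p*c) * (1 - PowerSeries.X^c) := by rw [V_pow_p p c hc]

lemma V_pow_sub2 (c : ℕ) (hc : 0 < c) :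
    V (ZMod p) c ^ (p-2) = V (ZMod p) (p*c) * (1 - PowerSeries.X^c)^2 := by
  have hp : 2 ≤ p := (Fact.out : p.Prime).two_le
  have h := V_mul (ZMod p) c hc
  calc V (ZMod p) c ^ (p-2)
      = V (ZMod p) c ^ (p-2) * (((1 - PowerSeries.X^c) * V (ZMod p) c)
          * ((1 - PowerSeries.X^c) * V (ZMod p) c)) := by rw [h]; ring
    _ = (V (ZMod p) c ^ (p-2) * V (ZMod p) c * V (ZMod p) c) * (1 - PowerSeries.X^c)^2 := by ring
    _ = V (ZMod p) c ^ p * (1 - PowerSeries.X^c)^2 := by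
        rw [← pow_succ, ← pow_succ]; congr 2; omega
    _ = V (ZMod p) (p*c) * (1 - PowerSeries.X^c)^2 := by rw [V_pow_p p c hc]

/-- coefficients supported on multiples of `p` -/
def SuppP (f : PowerSeries (ZMod p)) : Prop :=
  ∀ i : ℕ, ¬ (p ∣ i) → PowerSeries.coeff (R := ZMod p) i f = 0

lemma suppP_one : SuppP p 1 := by
  intro i hi
  rw [PowerSeries.coeff_one, if_neg (by rintro rfl; exact hi ⟨0, rfl⟩)]

lemma suppP_mul {f g : PowerSeries (ZMod p)} (hf : SuppP p f) (hg : SuppP p g) :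
    SuppP p (f * g) := by
  intro i hi
  rw [PowerSeries.coeff_mul]
  apply Finset.sum_eq_zero
  intro x hx
  rw [Finset.HasAntidiagonal.mem_antidiagonal] at hx
  by_cases hx1 : p ∣ x.1
  · have h2 : ¬ p ∣ x.2 := fun hd => hi (by rw [← hx]; exact Nat.dvd_add hx1 hd)
    rw [hg x.2 h2, mul_zero]
  · rw [hf x.1 hx1, zero_mul]

lemma suppP_pow {f : PowerSeries (ZMod p)} (hf : SuppP p f) (e : ℕ) : SuppP p (f^e) := by
  induction e with
  | zero => simpa using suppP_one p
  | succ e ih => rw [pow_succ]; exact suppP_mul p ih hf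

lemma suppP_V (c : ℕ) (hc : 0 < c) : SuppP p (V (ZMod p) (p*c)) := by
  have hp : 0 < p := (Fact.out : p.Prime).pos
  have hpc : 0 < p*c := by positivity
  set g : PowerSeries (ZMod p) := PowerSeries.mk (fun i => if p*c ∣ i then 1 else 0) with hgdef
  have hmul : (1 - PowerSeries.X^(p*c)) * g = 1 := by
    ext n
    rw [sub_mul, one_mul, map_sub, PowerSeries.coeff_one]
    rw [mul_comm (PowerSeries.X^(p*c)) g, PowerSeries.coeff_mul_X_pow']
    simp only [hgdef, PowerSeries.coeff_mk]
    rcases Nat.eq_zero_or_pos n with rfl|hn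
    · rw [if_pos (dvd_zero (p*c)), if_neg (show ¬ p*c ≤ 0 by omega), if_pos rfl]
      norm_num
    · rw [if_neg (show ¬ n = 0 by omega)]
      by_cases hd : p*c ∣ n
      · rw [if_pos hd, if_pos (Nat.le_of_dvd hn hd), if_pos ((Nat.dvd_sub hd dvd_rfl))]
        ring
      · rw [if_neg hd]
        by_cases hle : p*c ≤ n
        · rw [if_pos hle, if_neg (fun h => hd (by
            have h2 := Nat.dvd_add h (dvd_refl (p*c))
            rwa [Nat.sub_add_cancel hle] at h2))]
          ring
        · rw [if_neg hle]
          ring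
  have hVg : V (ZMod p) (p*c) = g := inv_unique _ _ _ (V_mul _ _ hpc) hmul
  intro i hi
  rw [hVg, hgdef, PowerSeries.coeff_mk, if_neg (fun h => hi (dvd_trans (Dvd.intro c rfl) h))]

end PS

lemma suppP_prod (p : ℕ) [Fact p.Prime] {ι : Type*} (s : Finset ι)
    (f : ι → PowerSeries (ZMod p)) (h : ∀ i ∈ s, SuppP p (f i)) :
    SuppP p (∏ i ∈ s, f i) :=
  Finset.prod_induction f (SuppP p) (fun _ _ ha hb => suppP_mul p ha hb) (suppP_one p) h

end Stmt9




/-- `colorPart r s n` is the number `a_{r,s}(n)` of partitions of `n` in which even parts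
may appear in any of `r` colors and odd parts in any of `s` colors, realized as the
coefficient of `q^n` in `∏_{m ≥ 1} (1 - q^{2m-1})^{-s} (1 - q^{2m})^{-r}` over `ℤ`.  Since
the factors with `2m - 1 > n` do not affect the coefficient of `q^n`, this coefficient
equals the coefficient of `q^n` in the finite product of the factors for `1 ≤ m ≤ n + 1`. -/
noncomputable def colorPart (r s n : ℕ) : ℤ :=
  PowerSeries.coeff (R := ℤ) n
    (∏ m ∈ Finset.range (n + 1),
      (PowerSeries.invOfUnit (1 - PowerSeries.X ^ (2 * m + 1)) 1) ^ s *
      (PowerSeries.invOfUnit (1 - PowerSeries.X ^ (2 * m + 2)) 1) ^ r)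

theorem stmt9 (p : ℕ) (hp : p.Prime) (hp5 : 5 ≤ p)
    (r : ℕ) (hr1 : 1 ≤ r) (hr2 : r ≤ p - 1)
    (hqnr : ∀ x : ℤ, ¬ x ^ 2 ≡ (r : ℕ) [ZMOD p])
    (n j k : ℕ) (hjk : j ≤ k) :
    colorPart (p * (k - j) + (p - 1)) (p * k + (p - 2)) (p * n + r) ≡ 0 [ZMOD p] := by
  haveI : Fact p.Prime := ⟨hp⟩
  haveI : NeZero p := ⟨hp.pos.ne'⟩
  open Stmt9 PowerSeries in
  have main : ((colorPart (p * (k - j) + (p - 1)) (p * k + (p - 2)) (p * n + r) : ℤ) : ZMod p) = 0 := by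
    set A := ZMod p
    set φ : ℤ →+* A := Int.castRingHom A with hφ
    set N := p * n + r with hN
    set S := p * k + (p - 2) with hS
    set RR := p * (k - j) + (p - 1) with hRR
    have hppos : 0 < p := hp.pos
    -- the integer power series in the definition
    set F : PowerSeries ℤ := ∏ m ∈ Finset.range (N + 1),
      (V ℤ (2 * m + 1)) ^ S * (V ℤ (2 * m + 2)) ^ RR with hF
    have hcp : colorPart RR S N = PowerSeries.coeff (R := ℤ) N F := rfl
    rw [hcp, show ((PowerSeries.coeff (R := ℤ) N F : ℤ) : A) = φ (PowerSeries.coeff (R := ℤ) N F) from rfl,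
      ← PowerSeries.coeff_map]
    -- push the map through
    have hmapF : PowerSeries.map φ F
        = ∏ m ∈ Finset.range (N + 1), (V A (2 * m + 1)) ^ S * (V A (2 * m + 2)) ^ RR := by
      rw [hF, map_prod]
      apply Finset.prod_congr rfl
      intro m _
      rw [map_mul, map_pow, map_pow, V_map φ _ (by omega), V_map φ _ (by omega)]
    rw [hmapF]
    -- transform each factor
    have hfac : ∀ m : ℕ, (V A (2 * m + 1)) ^ S * (V A (2 * m + 2)) ^ RR
        = ((1 - PowerSeries.X ^ (2 * m + 1)) ^ 2 * (1 - PowerSeries.X ^ (2 * m + 2)))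
          * ((V A (p * (2 * m + 1))) ^ (k + 1) * (V A (p * (2 * m + 2))) ^ (k - j + 1)) := by
      intro m
      have e1 : (V A (2 * m + 1)) ^ S
          = (V A (p * (2 * m + 1))) ^ (k + 1) * (1 - PowerSeries.X ^ (2 * m + 1)) ^ 2 := by
        rw [hS, pow_add, pow_mul, V_pow_p p _ (by omega), V_pow_sub2 p _ (by omega), pow_succ]
        ring
      have e2 : (V A (2 * m + 2)) ^ RR
          = (V A (p * (2 * m + 2))) ^ (k - j + 1) * (1 - PowerSeries.X ^ (2 * m + 2)) := by
        rw [hRR, pow_add, pow_mul, V_pow_p p _ (by omega), V_pow_sub1 p _ (by omega), pow_succ]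
        ring
      rw [e1, e2]
      ring
    rw [Finset.prod_congr rfl (fun m _ => hfac m), Finset.prod_mul_distrib]
    -- the H part is supported on multiples of p
    have hH : SuppP p (∏ m ∈ Finset.range (N + 1),
        (V A (p * (2 * m + 1))) ^ (k + 1) * (V A (p * (2 * m + 2))) ^ (k - j + 1)) := by
      apply suppP_prod
      intro m _
      exact suppP_mul p (suppP_pow p (suppP_V p _ (by omega)) _)
        (suppP_pow p (suppP_V p _ (by omega)) _)
    -- the G part comes from an integer polynomial
    set PG : Polynomial ℤ := ∏ m ∈ Finset.range (N + 1),
      ((1 - Polynomial.X ^ (2 * m + 1)) ^ 2 * (1 - Polynomial.X ^ (2 * m + 2))) with hPG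
    have hGmap : (∏ m ∈ Finset.range (N + 1),
        ((1 - PowerSeries.X ^ (2 * m + 1)) ^ 2 * (1 - PowerSeries.X ^ (2 * m + 2)) : PowerSeries A))
        = PowerSeries.map φ (Polynomial.coeToPowerSeries.ringHom PG) := by
      rw [hPG, map_prod, map_prod]
      apply Finset.prod_congr rfl
      intro m _
      simp only [map_mul, map_pow, map_sub, map_one,
        Polynomial.coeToPowerSeries.ringHom_apply, Polynomial.coe_X, PowerSeries.map_X]
    have hGcoeff : ∀ x : ℕ, PowerSeries.coeff (R := A) x (∏ m ∈ Finset.range (N + 1),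
        ((1 - PowerSeries.X ^ (2 * m + 1)) ^ 2 * (1 - PowerSeries.X ^ (2 * m + 2)) : PowerSeries A))
        = ((PG.coeff x : ℤ) : A) := by
      intro x
      rw [hGmap, PowerSeries.coeff_map, Polynomial.coeToPowerSeries.ringHom_apply,
        Polynomial.coeff_coe]
      rfl
    -- final coefficient computation
    rw [PowerSeries.coeff_mul]
    apply Finset.sum_eq_zero
    intro q hq
    rw [Finset.HasAntidiagonal.mem_antidiagonal] at hq
    by_cases hdvd : p ∣ q.2
    · -- then q.1 ≡ r mod p, hence not a square, hence PG coefficient vanishes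
      rw [hGcoeff q.1]
      have hns : ∀ t : ℕ, t ^ 2 ≠ q.1 := by
        intro t ht
        apply hqnr (t : ℤ)
        obtain ⟨y', hy'⟩ := hdvd
        rw [Int.modEq_iff_dvd]
        have hsum : (q.1 : ℤ) + q.2 = (p : ℤ) * n + r := by exact_mod_cast hq
        have hyz : (q.2 : ℤ) = (p : ℤ) * y' := by exact_mod_cast hy'
        have hxz : ((t : ℤ))^2 = (q.1 : ℤ) := by exact_mod_cast ht
        have hlin : ((t : ℤ))^2 - (r : ℤ) = (p : ℤ) * ((n : ℤ) - y') := by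
          rw [hxz]
          push_cast at hsum ⊢
          linarith [hsum, hyz]
        exact ⟨(y' : ℤ) - n, by linear_combination -hlin⟩
      have hq1N : q.1 ≤ N := by omega
      rw [hPG, Stmt9.key_poly N q.1 hq1N hns]
      norm_num
    · rw [hH q.2 hdvd, mul_zero]
  have hdvd : (p : ℤ) ∣ colorPart (p * (k - j) + (p - 1)) (p * k + (p - 2)) (p * n + r) :=
    (ZMod.intCast_zmod_eq_zero_iff_dvd _ p).mp main
  exact (Int.modEq_zero_iff_dvd).mpr hdvd
end

section
/- Let p ≥ 5 be a prime and let r be an integer with 1 ≤ r ≤ p-1 such that 12r+1 is a quadratic non-residue modulo p. Then for all integers n ≥ 0 and all integers k ≥ j ≥ 0, a_{p(k-j)+(p-1), pk+p}(pn+r) ≡ 0 (mod p). -/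
open Finset PowerSeries

namespace Stmt10Aux

/-- length of the maximal run `M, M-1, ...` contained in `T` -/
noncomputable def runLen (T : Finset ℕ) (M : ℕ) : ℕ :=
  Nat.find (p := fun c => M < c ∨ M - c ∉ T) ⟨M + 1, Or.inl (Nat.lt_succ_self M)⟩

lemma runLen_spec (T : Finset ℕ) (M : ℕ) :
    M < runLen T M ∨ M - runLen T M ∉ T := by
  unfold runLen
  exact Nat.find_spec (p := fun c => M < c ∨ M - c ∉ T) ⟨M + 1, Or.inl (Nat.lt_succ_self M)⟩

lemma runLen_min (T : Finset ℕ) (M : ℕ) {c : ℕ} (h : c < runLen T M) :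
    c ≤ M ∧ M - c ∈ T := by
  unfold runLen at h
  have := Nat.find_min _ h
  push_neg at this
  exact this

lemma le_runLen (T : Finset ℕ) (M : ℕ) {c : ℕ}
    (h : ∀ b < c, b ≤ M ∧ M - b ∈ T) : c ≤ runLen T M := by
  by_contra hc
  push_neg at hc
  rcases runLen_spec T M with h1 | h1
  · exact absurd (h _ hc).1 (by omega)
  · exact h1 (h _ hc).2

noncomputable def fr (T : Finset ℕ) : Finset ℕ :=
  if h : T.Nonempty then
    if T.min' h + 1 ≤ runLen T (T.max' h) then
      insert (T.max' h + 1) ((T.erase (T.min' h)).erase (T.max' h - T.min' h))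
    else
      insert (runLen T (T.max' h) - 1)
        (insert (T.max' h - runLen T (T.max' h)) (T.erase (T.max' h)))
  else ∅

lemma fr_of_cond1 (T : Finset ℕ) (h : T.Nonempty)
    (hc : T.min' h + 1 ≤ runLen T (T.max' h)) :
    fr T = insert (T.max' h + 1)
      ((T.erase (T.min' h)).erase (T.max' h - T.min' h)) := by
  unfold fr
  rw [dif_pos h, if_pos hc]

lemma fr_of_cond2 (T : Finset ℕ) (h : T.Nonempty)
    (hc : ¬ (T.min' h + 1 ≤ runLen T (T.max' h))) :
    fr T = insert (runLen T (T.max' h) - 1)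
      (insert (T.max' h - runLen T (T.max' h)) (T.erase (T.max' h))) := by
  unfold fr
  rw [dif_pos h, if_neg hc]

/-- Sum of `m+1` over an interval `Icc a b`, doubled. -/
lemma sum_Icc_aux (a b : ℕ) (hab : a ≤ b) :
    2 * ∑ m ∈ Icc a b, (m + 1) = (b + 1 - a) * (a + b + 2) := by
  induction b with
  | zero =>
    interval_cases a
    rw [Finset.Icc_self, sum_singleton]
  | succ b ih =>
    rcases Nat.lt_or_ge a (b + 1) with h | h
    · have ha : a ≤ b := by omega
      obtain ⟨c, rfl⟩ : ∃ c, b = a + c := ⟨b - a, by omega⟩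
      have hins : Icc a (a + c + 1) = insert (a + c + 1) (Icc a (a + c)) := by
        ext x
        simp only [mem_Icc, mem_insert]
        omega
      rw [hins, sum_insert (by simp [mem_Icc]), mul_add, ih ha]
      have e1 : a + c + 1 - a = c + 1 := by omega
      have e2 : a + c + 1 + 1 - a = c + 2 := by omega
      rw [e1, e2]
      ring
    · have : a = b + 1 := by omega
      subst this
      rw [Finset.Icc_self, sum_singleton]
      have e : b + 1 + 1 - (b + 1) = 1 := by omega
      rw [e, one_mul]
      omega

lemma fr_spec (u : ℕ) (hu : ∀ t : ℤ, (2 * u : ℤ) ≠ t * (3 * t - 1))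
    (T : Finset ℕ) (hsum : ∑ m ∈ T, (m + 1) = u) :
    (∑ m ∈ fr T, (m + 1) = u) ∧ fr (fr T) = T ∧
      ((fr T).card = T.card + 1 ∨ T.card = (fr T).card + 1) := by
  have hu0 : u ≠ 0 := by
    intro h
    exact hu 0 (by simp [h])
  have hne : T.Nonempty := by
    rcases T.eq_empty_or_nonempty with h | h
    · exfalso; apply hu0; rw [← hsum, h, sum_empty]
    · exact h
  set s := T.min' hne with hs_def
  set M := T.max' hne with hM_def
  set σ := runLen T M with hσ_def
  have hsT : s ∈ T := T.min'_mem hne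
  have hMT : M ∈ T := T.max'_mem hne
  have hsM : s ≤ M := T.min'_le M hMT
  have hσ1 : 1 ≤ σ := by
    rcases Nat.eq_zero_or_pos σ with h | h
    · exfalso
      rcases runLen_spec T M with h1 | h1 <;> rw [← hσ_def, h] at h1
      · omega
      · simp only [Nat.sub_zero] at h1; exact h1 hMT
    · exact h
  have hrun : ∀ c < σ, c ≤ M ∧ M - c ∈ T := fun c hc => runLen_min T M hc
  have hmin_le : ∀ x ∈ T, s ≤ x := fun x hx => T.min'_le x hx
  have hmax_ge : ∀ x ∈ T, x ≤ M := fun x hx => T.le_max' x hx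
  by_cases h1 : s + 1 ≤ σ
  · -- Case 1: smallest part ≤ staircase length
    have hMs_mem : M - s ∈ T := (hrun s (by omega)).2
    have hsMs : s ≤ M - s := hmin_le _ hMs_mem
    have hne2 : s ≠ M - s := by
      intro he
      have hM2s : M = 2 * s := by omega
      have hTeq : T = Icc s M := by
        apply Subset.antisymm
        · intro x hx
          exact mem_Icc.mpr ⟨hmin_le x hx, hmax_ge x hx⟩
        · intro x hx
          rw [mem_Icc] at hx
          have hc : M - x < σ := by omega
          have hmm := (hrun _ hc).2
          have hxx : M - (M - x) = x := by omega
          rwa [hxx] at hmm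
      have h2u : 2 * u = (s + 1) * (3 * s + 2) := by
        rw [← hsum, hTeq, sum_Icc_aux s M hsM, hM2s]
        have e : 2 * s + 1 - s = s + 1 := by omega
        rw [e]
        ring
      refine absurd ?_ (hu ((s : ℤ) + 1))
      have hc' : ((2 * u : ℕ) : ℤ) = (((s + 1) * (3 * s + 2) : ℕ) : ℤ) := by
        exact_mod_cast h2u
      push_cast at hc'
      push_cast
      linear_combination hc'
    have hslt : s < M - s := lt_of_le_of_ne hsMs hne2
    have hMnotmem : M + 1 ∉ (T.erase s).erase (M - s) := by
      intro h
      have := hmax_ge _ (mem_of_mem_erase (mem_of_mem_erase h))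
      omega
    have hMs_mem' : M - s ∈ T.erase s := mem_erase.mpr ⟨by omega, hMs_mem⟩
    have hfrT : fr T = insert (M + 1) ((T.erase s).erase (M - s)) :=
      fr_of_cond1 T hne h1
    have hsum1 : ∑ m ∈ T.erase s, (m + 1) + (s + 1) = ∑ m ∈ T, (m + 1) :=
      Finset.sum_erase_add T _ hsT
    have hsum2 : ∑ m ∈ (T.erase s).erase (M - s), (m + 1) + (M - s + 1)
        = ∑ m ∈ T.erase s, (m + 1) :=
      Finset.sum_erase_add _ _ hMs_mem'
    have hsumfr : ∑ m ∈ fr T, (m + 1) = u := by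
      rw [hfrT, sum_insert hMnotmem]
      omega
    have hcard : T.card = (fr T).card + 1 := by
      rw [hfrT, card_insert_of_notMem hMnotmem,
        card_erase_of_mem hMs_mem', card_erase_of_mem hsT]
      have h2 : 1 < T.card := Finset.one_lt_card.mpr ⟨s, hsT, M - s, hMs_mem, hne2⟩
      omega
    have hfrfr : fr (fr T) = T := by
      set T' := fr T with hT'_def
      have hT'eq : T' = insert (M + 1) ((T.erase s).erase (M - s)) := hfrT
      have hne' : T'.Nonempty := by rw [hT'eq]; exact insert_nonempty _ _
      have hmem' : ∀ x ∈ T', x = M + 1 ∨ (x ∈ T ∧ x ≠ s ∧ x ≠ M - s) := by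
        intro x hx
        rw [hT'eq, mem_insert] at hx
        rcases hx with h | h
        · exact Or.inl h
        · rw [mem_erase, mem_erase] at h
          exact Or.inr ⟨h.2.2, h.2.1, h.1⟩
      have hmax' : T'.max' hne' = M + 1 := by
        apply le_antisymm
        · apply Finset.max'_le
          intro y hy
          rcases hmem' y hy with h | h
          · omega
          · have := hmax_ge y h.1; omega
        · apply Finset.le_max'
          rw [hT'eq]; exact mem_insert_self _ _
      have hminlb : ∀ x ∈ T', s + 1 ≤ x := by
        intro x hx
        rcases hmem' x hx with h | h
        · omega
        · have := hmin_le x h.1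
          omega
      have hrun' : runLen T' (M + 1) = s + 1 := by
        apply le_antisymm
        · by_contra hc
          push_neg at hc
          have hmm := runLen_min T' (M + 1) (c := s + 1) hc
          have heq : M + 1 - (s + 1) = M - s := by omega
          rw [heq] at hmm
          rcases hmem' _ hmm.2 with h | h
          · omega
          · exact h.2.2 rfl
        · apply le_runLen
          intro b hb
          refine ⟨by omega, ?_⟩
          rcases Nat.eq_zero_or_pos b with h | h
          · subst h
            simp only [Nat.sub_zero]
            rw [hT'eq]; exact mem_insert_self _ _
          · have hb1 : b - 1 < σ := by omega
            have hmem := (hrun _ hb1).2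
            have heq : M + 1 - b = M - (b - 1) := by omega
            rw [heq, hT'eq]
            apply mem_insert_of_mem
            refine mem_erase.mpr ⟨by omega, mem_erase.mpr ⟨by omega, hmem⟩⟩
      have hcond' : ¬ (T'.min' hne' + 1 ≤ runLen T' (T'.max' hne')) := by
        rw [hmax', hrun']
        have := hminlb _ (T'.min'_mem hne')
        omega
      rw [fr_of_cond2 T' hne' hcond', hmax', hrun']
      have e1 : T'.erase (M + 1) = (T.erase s).erase (M - s) := by
        rw [hT'eq]; exact erase_insert hMnotmem
      have e2 : M + 1 - (s + 1) = M - s := by omega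
      have e3 : s + 1 - 1 = s := by omega
      rw [e2, e3, e1, insert_erase hMs_mem', insert_erase hsT]
    exact ⟨hsumfr, hfrfr, Or.inr hcard⟩
  · -- Case 2: staircase length < smallest part
    push_neg at h1
    have hσs : σ ≤ s := by omega
    have hMσ : M - σ ∉ T := by
      rcases runLen_spec T M with h | h <;> rw [← hσ_def] at h
      · omega
      · exact h
    have hbot : M - (σ - 1) ∈ T := (hrun (σ - 1) (by omega)).2
    have hbot' : s ≤ M - (σ - 1) := hmin_le _ hbot
    have hne2 : M - σ ≠ σ - 1 := by
      intro he
      have hMeq : M = 2 * σ - 1 := by omega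
      have hTeq : T = Icc σ M := by
        apply Subset.antisymm
        · intro x hx
          refine mem_Icc.mpr ⟨?_, hmax_ge x hx⟩
          have := hmin_le x hx; omega
        · intro x hx
          rw [mem_Icc] at hx
          have hc : M - x < σ := by omega
          have hmm := (hrun _ hc).2
          have hxx : M - (M - x) = x := by omega
          rwa [hxx] at hmm
      have h2u : 2 * u = σ * (3 * σ + 1) := by
        rw [← hsum, hTeq, sum_Icc_aux σ M (by omega), hMeq]
        have e1 : 2 * σ - 1 + 1 - σ = σ := by omega
        have e2 : σ + (2 * σ - 1) + 2 = 3 * σ + 1 := by omega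
        rw [e1, e2]
      refine absurd ?_ (hu (-(σ : ℤ)))
      have hc' : ((2 * u : ℕ) : ℤ) = ((σ * (3 * σ + 1) : ℕ) : ℤ) := by
        exact_mod_cast h2u
      push_cast at hc'
      push_cast
      linear_combination hc'
    have hσMσ : σ ≤ M - σ := by omega
    have hcond : ¬ (s + 1 ≤ σ) := by omega
    have hfrT : fr T = insert (σ - 1) (insert (M - σ) (T.erase M)) :=
      fr_of_cond2 T hne hcond
    have hm1 : M - σ ∉ T.erase M := fun h => hMσ (mem_of_mem_erase h)
    have hm2 : σ - 1 ∉ insert (M - σ) (T.erase M) := by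
      rw [mem_insert]
      rintro (h | h)
      · omega
      · have := hmin_le _ (mem_of_mem_erase h)
        omega
    have hsum1 : ∑ m ∈ T.erase M, (m + 1) + (M + 1) = ∑ m ∈ T, (m + 1) :=
      Finset.sum_erase_add T _ hMT
    have hsumfr : ∑ m ∈ fr T, (m + 1) = u := by
      rw [hfrT, sum_insert hm2, sum_insert hm1]
      omega
    have hcard : (fr T).card = T.card + 1 := by
      rw [hfrT, card_insert_of_notMem hm2, card_insert_of_notMem hm1,
        card_erase_of_mem hMT]
      have := Finset.card_pos.mpr hne
      omega
    have hfrfr : fr (fr T) = T := by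
      set T' := fr T with hT'_def
      have hT'eq : T' = insert (σ - 1) (insert (M - σ) (T.erase M)) := hfrT
      have hne' : T'.Nonempty := by rw [hT'eq]; exact insert_nonempty _ _
      have hmem' : ∀ x ∈ T', x = σ - 1 ∨ x = M - σ ∨ (x ∈ T ∧ x ≠ M) := by
        intro x hx
        rw [hT'eq, mem_insert, mem_insert, mem_erase] at hx
        tauto
      have hM1 : 1 ≤ M := by omega
      have hmaxmem : M - 1 ∈ T' := by
        rcases Nat.eq_or_lt_of_le hσ1 with h | h
        · have he : M - σ = M - 1 := by omega
          rw [hT'eq, ← he]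
          exact mem_insert_of_mem (mem_insert_self _ _)
        · have hmem := (hrun 1 (by omega)).2
          rw [hT'eq]
          exact mem_insert_of_mem (mem_insert_of_mem
            (mem_erase.mpr ⟨by omega, hmem⟩))
      have hmax' : T'.max' hne' = M - 1 := by
        apply le_antisymm
        · apply Finset.max'_le
          intro y hy
          rcases hmem' y hy with h | h | h
          · omega
          · omega
          · have := hmax_ge y h.1; omega
        · exact Finset.le_max' _ _ hmaxmem
      have hmin' : T'.min' hne' = σ - 1 := by
        apply le_antisymm
        · apply Finset.min'_le
          rw [hT'eq]; exact mem_insert_self _ _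
        · apply Finset.le_min'
          intro y hy
          rcases hmem' y hy with h | h | h
          · omega
          · omega
          · have := hmin_le y h.1; omega
      have hrun' : σ ≤ runLen T' (M - 1) := by
        apply le_runLen
        intro b hb
        refine ⟨by omega, ?_⟩
        rcases Nat.eq_or_lt_of_le (by omega : b + 1 ≤ σ) with h | h
        · have he : M - 1 - b = M - σ := by omega
          rw [he, hT'eq]
          exact mem_insert_of_mem (mem_insert_self _ _)
        · have hmem := (hrun (b + 1) (by omega)).2
          have he : M - 1 - b = M - (b + 1) := by omega
          rw [he, hT'eq]
          exact mem_insert_of_mem (mem_insert_of_mem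
            (mem_erase.mpr ⟨by omega, hmem⟩))
      have hcond' : T'.min' hne' + 1 ≤ runLen T' (T'.max' hne') := by
        rw [hmax', hmin']
        omega
      rw [fr_of_cond1 T' hne' hcond', hmax', hmin']
      have e0 : M - 1 + 1 = M := by omega
      have e1 : M - 1 - (σ - 1) = M - σ := by omega
      have e2 : T'.erase (σ - 1) = insert (M - σ) (T.erase M) := by
        rw [hT'eq]; exact erase_insert hm2
      rw [e0, e1, e2, erase_insert hm1, insert_erase hMT]
    exact ⟨hsumfr, hfrfr, Or.inl hcard⟩

/-- Franklin's pentagonal-number involution: if `2u` is not of the form `t(3t-1)`,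
the signed count of partitions of `u` into distinct parts vanishes. -/
lemma franklin (u : ℕ) (hu : ∀ t : ℤ, (2 * u : ℤ) ≠ t * (3 * t - 1)) :
    ∑ T ∈ (Finset.range u).powerset.filter (fun T => ∑ m ∈ T, (m + 1) = u),
      (-1 : ℤ) ^ T.card = 0 := by
  have key : ∀ T ∈ (Finset.range u).powerset.filter
      (fun T => ∑ m ∈ T, (m + 1) = u),
      (∑ m ∈ fr T, (m + 1) = u) ∧ fr (fr T) = T ∧
        ((fr T).card = T.card + 1 ∨ T.card = (fr T).card + 1) := by
    intro T hT
    rw [mem_filter] at hT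
    exact fr_spec u hu T hT.2
  have hmem : ∀ T (hT : T ∈ (Finset.range u).powerset.filter
      (fun T => ∑ m ∈ T, (m + 1) = u)),
      fr T ∈ (Finset.range u).powerset.filter (fun T => ∑ m ∈ T, (m + 1) = u) := by
    intro T hT
    obtain ⟨hsum, -, -⟩ := key T hT
    rw [mem_filter, mem_powerset]
    refine ⟨fun x hx => ?_, hsum⟩
    rw [mem_range]
    have : x + 1 ≤ ∑ m ∈ fr T, (m + 1) :=
      Finset.single_le_sum (fun i _ => Nat.zero_le _) hx
    omega
  apply Finset.sum_involution (fun T _ => fr T)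
  · intro T hT
    obtain ⟨-, -, hcard⟩ := key T hT
    rcases hcard with h | h <;> rw [h] <;> ring
  · intro T hT _
    obtain ⟨-, -, hcard⟩ := key T hT
    intro heq
    rw [heq] at hcard
    omega
  · exact hmem
  · intro T hT
    exact (key T hT).2.1


variable {R : Type*} [CommRing R]

noncomputable def geom (R : Type*) [CommRing R] (d : ℕ) : PowerSeries R :=
  PowerSeries.mk fun i => if d ∣ i then 1 else 0

lemma one_sub_mul_geom (d : ℕ) (hd : d ≠ 0) :
    ((1 : R⟦X⟧) - X ^ d) * geom R d = 1 := by
  ext n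
  rw [sub_mul, one_mul, map_sub, coeff_one,
    show (X : R⟦X⟧) ^ d * geom R d = geom R d * X ^ d from mul_comm _ _,
    coeff_mul_X_pow']
  simp only [geom, coeff_mk]
  rcases eq_or_ne n 0 with rfl | hn
  · rw [if_pos rfl, if_pos (dvd_zero d), if_neg (by omega), sub_zero]
  · rw [if_neg hn]
    by_cases hdn : d ∣ n
    · have hle : d ≤ n := Nat.le_of_dvd (Nat.pos_of_ne_zero hn) hdn
      rw [if_pos hdn, if_pos hle, if_pos (Nat.dvd_sub hdn dvd_rfl), sub_self]
    · rw [if_neg hdn]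
      by_cases hle : d ≤ n
      · rw [if_pos hle, if_neg, sub_zero]
        intro hdd
        apply hdn
        have hne : n = (n - d) + d := (Nat.sub_add_cancel hle).symm
        rw [hne]
        exact Nat.dvd_add hdd dvd_rfl
      · rw [if_neg hle, sub_zero]

lemma mul_eq_one_unique {a b c : R⟦X⟧} (h1 : a * b = 1) (h2 : a * c = 1) :
    b = c := by
  calc b = b * (a * c) := by rw [h2, mul_one]
    _ = c * (a * b) := by ring
    _ = c := by rw [h1, mul_one]

lemma constantCoeff_one_sub_X_pow (d : ℕ) (hd : d ≠ 0) :
    constantCoeff ((1 : R⟦X⟧) - X ^ d) = 1 := by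
  rw [map_sub, map_one, map_pow, constantCoeff_X, zero_pow hd, sub_zero]

lemma one_sub_mul_invOfUnit (d : ℕ) (hd : d ≠ 0) :
    ((1 : R⟦X⟧) - X ^ d) * PowerSeries.invOfUnit ((1 : R⟦X⟧) - X ^ d) 1 = 1 :=
  PowerSeries.mul_invOfUnit _ _ (by rw [constantCoeff_one_sub_X_pow d hd]; rfl)

lemma map_invOfUnit_one_sub_X_pow {S : Type*} [CommRing S] (f : R →+* S)
    (d : ℕ) (hd : d ≠ 0) :
    PowerSeries.map f (PowerSeries.invOfUnit ((1 : R⟦X⟧) - X ^ d) 1) = geom S d := by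
  refine mul_eq_one_unique (a := (1 : S⟦X⟧) - X ^ d) ?_ (one_sub_mul_geom d hd)
  have h1 := congrArg (PowerSeries.map f) (one_sub_mul_invOfUnit (R := R) d hd)
  rw [map_mul, map_one, map_sub, map_one, map_pow, PowerSeries.map_X] at h1
  exact h1

section CharP

variable (p : ℕ) [Fact p.Prime] [CharP R p]

lemma psCharP : CharP (R⟦X⟧) p :=
  charP_of_injective_ringHom (PowerSeries.C_injective) p

lemma geom_pow_char (d : ℕ) (hd : d ≠ 0) :
    geom R d ^ p = geom R (p * d) := by
  haveI := psCharP (R := R) p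
  have hfrob : ((1 : R⟦X⟧) - X ^ d) ^ p = 1 - X ^ (p * d) := by
    rw [sub_pow_char, one_pow, ← pow_mul, mul_comm d p]
  refine mul_eq_one_unique (a := (1 : R⟦X⟧) - X ^ (p * d)) ?_
    (one_sub_mul_geom _ (Nat.mul_ne_zero (Fact.out (p := p.Prime)).ne_zero hd))
  rw [← hfrob, ← mul_pow, one_sub_mul_geom d hd, one_pow]

lemma geom_pow_pred (d : ℕ) (hd : d ≠ 0) :
    geom R d ^ (p - 1) = ((1 : R⟦X⟧) - X ^ d) * geom R (p * d) := by
  have hp1 : 1 ≤ p := (Fact.out (p := p.Prime)).pos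
  have h1 : geom R d ^ p = geom R d ^ (p - 1) * geom R d := by
    rw [← pow_succ]
    congr 1
    omega
  calc geom R d ^ (p - 1)
      = geom R d ^ (p - 1) * (((1 : R⟦X⟧) - X ^ d) * geom R d) := by
        rw [one_sub_mul_geom d hd, mul_one]
    _ = ((1 : R⟦X⟧) - X ^ d) * (geom R d ^ p) := by rw [h1]; ring
    _ = ((1 : R⟦X⟧) - X ^ d) * geom R (p * d) := by rw [geom_pow_char p d hd]

end CharP

section Supp

variable (p : ℕ)

def PSupp (f : R⟦X⟧) : Prop := ∀ i, ¬ (p ∣ i) → PowerSeries.coeff (R := R) i f = 0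

lemma PSupp_one : PSupp (R := R) p 1 := by
  intro i hi
  rw [coeff_one, if_neg]
  intro h
  subst h
  exact hi (dvd_zero p)

lemma PSupp_mul {f g : R⟦X⟧} (hf : PSupp p f) (hg : PSupp p g) :
    PSupp p (f * g) := by
  intro i hi
  rw [coeff_mul]
  apply Finset.sum_eq_zero
  rintro ⟨a, b⟩ hab
  rw [Finset.HasAntidiagonal.mem_antidiagonal] at hab
  by_cases hpa : p ∣ a
  · rw [hg b (fun h => hi (hab ▸ Nat.dvd_add hpa h)), mul_zero]
  · rw [hf a hpa, zero_mul]

lemma PSupp_pow {f : R⟦X⟧} (hf : PSupp p f) (n : ℕ) : PSupp p (f ^ n) := by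
  induction n with
  | zero => simpa using PSupp_one (R := R) p
  | succ n ih => rw [pow_succ]; exact PSupp_mul p ih hf

lemma PSupp_geom (d : ℕ) : PSupp p (geom R (p * d)) := by
  intro i hi
  simp only [geom, coeff_mk]
  rw [if_neg]
  intro h
  exact hi (dvd_trans (dvd_mul_right p d) h)

end Supp

lemma coeff_prod_one_sub (N b : ℕ) (hb : b ≤ N)
    (h : ∀ t : ℤ, (b : ℤ) ≠ t * (3 * t - 1)) :
    PowerSeries.coeff (R := R) b
      (∏ m ∈ range (N + 1), ((1 : R⟦X⟧) - X ^ (2 * m + 2))) = 0 := by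
  have hprod : ∀ t : Finset ℕ, (∏ i ∈ t, (-(X : R⟦X⟧) ^ (2 * i + 2)))
      = PowerSeries.C (R := R) ((-1) ^ t.card) * X ^ (∑ i ∈ t, (2 * i + 2)) := by
    intro t
    have hc : ∀ i ∈ t, (-(X : R⟦X⟧) ^ (2 * i + 2))
        = (PowerSeries.C (R := R) (-1)) * X ^ (2 * i + 2) := by
      intro i _
      rw [map_neg, map_one]
      ring
    rw [Finset.prod_congr rfl hc, Finset.prod_mul_distrib, Finset.prod_const,
      ← map_pow, Finset.prod_pow_eq_pow_sum]
  have hexp : (∏ m ∈ range (N + 1), ((1 : R⟦X⟧) - X ^ (2 * m + 2)))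
      = ∑ t ∈ (range (N + 1)).powerset,
          PowerSeries.C (R := R) ((-1) ^ t.card) * X ^ (∑ i ∈ t, (2 * i + 2)) := by
    have hc : ∀ m ∈ range (N + 1), ((1 : R⟦X⟧) - X ^ (2 * m + 2))
        = (fun i => -(X : R⟦X⟧) ^ (2 * i + 2)) m + (fun _ => (1 : R⟦X⟧)) m := by
      intro m _
      simp only
      ring
    rw [Finset.prod_congr rfl hc, Finset.prod_add]
    refine Finset.sum_congr rfl fun t ht => ?_
    rw [Finset.prod_const_one, mul_one, hprod]
  rw [hexp, map_sum]
  have hcoeff : ∀ t ∈ (range (N + 1)).powerset,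
      PowerSeries.coeff (R := R) b (PowerSeries.C (R := R) ((-1) ^ t.card) * X ^ (∑ i ∈ t, (2 * i + 2)))
      = if ∑ i ∈ t, (2 * i + 2) = b then (-1) ^ t.card else 0 := by
    intro t ht
    rw [coeff_C_mul, coeff_X_pow]
    by_cases hcond : b = ∑ i ∈ t, (2 * i + 2)
    · rw [if_pos hcond, if_pos hcond.symm, mul_one]
    · rw [if_neg hcond, if_neg (Ne.symm hcond), mul_zero]
  rw [Finset.sum_congr rfl hcoeff]
  have hsum2 : ∀ t : Finset ℕ, ∑ i ∈ t, (2 * i + 2) = 2 * ∑ i ∈ t, (i + 1) := by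
    intro t
    rw [Finset.mul_sum]
    exact Finset.sum_congr rfl fun i _ => by ring
  rcases Nat.even_or_odd b with he | ho
  · obtain ⟨u, hu2⟩ := he
    rw [← Finset.sum_filter]
    have hfeq : (range (N + 1)).powerset.filter (fun t => ∑ i ∈ t, (2 * i + 2) = b)
        = (range u).powerset.filter (fun t => ∑ m ∈ t, (m + 1) = u) := by
      ext t
      simp only [Finset.mem_filter, Finset.mem_powerset]
      constructor
      · rintro ⟨hsub, heq⟩
        rw [hsum2] at heq
        have heq' : ∑ m ∈ t, (m + 1) = u := by omega
        refine ⟨fun x hx => ?_, heq'⟩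
        rw [Finset.mem_range]
        have hle : x + 1 ≤ ∑ m ∈ t, (m + 1) :=
          Finset.single_le_sum (f := fun m => m + 1) (fun i _ => Nat.zero_le _) hx
        omega
      · rintro ⟨hsub, heq⟩
        constructor
        · intro x hx
          have hx2 := hsub hx
          rw [Finset.mem_range] at hx2 ⊢
          omega
        · rw [hsum2, heq]
          omega
    rw [hfeq]
    have hfr := franklin u (by
      intro t heq
      apply h t
      rw [show ((b : ℕ) : ℤ) = 2 * (u : ℤ) from by push_cast [hu2]; ring, heq])
    calc (∑ t ∈ (range u).powerset.filter (fun t => ∑ m ∈ t, (m + 1) = u),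
          ((-1 : R)) ^ t.card)
        = ((∑ t ∈ (range u).powerset.filter (fun t => ∑ m ∈ t, (m + 1) = u),
          (-1 : ℤ) ^ t.card : ℤ) : R) := by push_cast; rfl
      _ = 0 := by rw [hfr, Int.cast_zero]
  · apply Finset.sum_eq_zero
    intro t ht
    rw [if_neg]
    obtain ⟨c, hc⟩ := ho
    rw [hsum2]
    omega


end Stmt10Aux

open Stmt10Aux in
theorem stmt10 (p : ℕ) (hp : p.Prime) (hp5 : 5 ≤ p)
    (r : ℕ) (hr1 : 1 ≤ r) (hr2 : r ≤ p - 1)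
    (hqnr : ∀ x : ℤ, ¬ x ^ 2 ≡ (12 * r + 1 : ℕ) [ZMOD p])
    (n j k : ℕ) (hjk : j ≤ k) :
    colorPart (p * (k - j) + (p - 1)) (p * k + p) (p * n + r) ≡ 0 [ZMOD p] := by
  haveI : Fact p.Prime := ⟨hp⟩
  set N := p * n + r with hN
  set rc := p * (k - j) + (p - 1) with hrc
  set sc := p * k + p with hsc
  -- reduce to vanishing in `ZMod p`
  suffices hmain : ((colorPart rc sc N : ℤ) : ZMod p) = 0 by
    rw [ZMod.intCast_zmod_eq_zero_iff_dvd] at hmain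
    exact Int.modEq_zero_iff_dvd.mpr hmain
  have hcast : ((colorPart rc sc N : ℤ) : ZMod p)
      = PowerSeries.coeff (R := ZMod p) N (PowerSeries.map (Int.castRingHom (ZMod p))
          (∏ m ∈ Finset.range (N + 1),
            (PowerSeries.invOfUnit (1 - PowerSeries.X ^ (2 * m + 1)) 1) ^ sc *
            (PowerSeries.invOfUnit (1 - PowerSeries.X ^ (2 * m + 2)) 1) ^ rc)) := by
    rw [colorPart, PowerSeries.coeff_map]
    rfl
  rw [hcast]
  have hmapF : PowerSeries.map (Int.castRingHom (ZMod p))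
      (∏ m ∈ Finset.range (N + 1),
        (PowerSeries.invOfUnit (1 - PowerSeries.X ^ (2 * m + 1)) 1) ^ sc *
        (PowerSeries.invOfUnit (1 - PowerSeries.X ^ (2 * m + 2)) 1) ^ rc)
      = ∏ m ∈ Finset.range (N + 1),
          geom (ZMod p) (2 * m + 1) ^ sc * geom (ZMod p) (2 * m + 2) ^ rc := by
    rw [map_prod]
    refine Finset.prod_congr rfl fun m _ => ?_
    rw [map_mul, map_pow, map_pow,
      map_invOfUnit_one_sub_X_pow _ _ (by omega),
      map_invOfUnit_one_sub_X_pow _ _ (by omega)]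
  rw [hmapF]
  have hp1 : 1 ≤ p := hp.pos
  have hfactor : ∀ m ∈ Finset.range (N + 1),
      geom (ZMod p) (2 * m + 1) ^ sc * geom (ZMod p) (2 * m + 2) ^ rc
      = (geom (ZMod p) (p * (2 * m + 1)) ^ (k + 1) *
          geom (ZMod p) (p * (2 * m + 2)) ^ (k - j + 1)) *
        ((1 : (ZMod p)⟦X⟧) - X ^ (2 * m + 2)) := by
    intro m _
    have h1 : geom (ZMod p) (2 * m + 1) ^ sc
        = geom (ZMod p) (p * (2 * m + 1)) ^ (k + 1) := by
      rw [hsc, show p * k + p = p * (k + 1) from by ring, pow_mul,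
        geom_pow_char p _ (by omega)]
    have h2 : geom (ZMod p) (2 * m + 2) ^ rc
        = geom (ZMod p) (p * (2 * m + 2)) ^ (k - j) *
          (((1 : (ZMod p)⟦X⟧) - X ^ (2 * m + 2)) * geom (ZMod p) (p * (2 * m + 2))) := by
      rw [hrc, pow_add, pow_mul, geom_pow_char p _ (by omega),
        geom_pow_pred p _ (by omega)]
    rw [h1, h2, pow_succ]
    ring
  rw [Finset.prod_congr rfl hfactor, Finset.prod_mul_distrib, PowerSeries.coeff_mul]
  apply Finset.sum_eq_zero
  rintro ⟨a, b⟩ hab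
  rw [Finset.HasAntidiagonal.mem_antidiagonal] at hab
  by_cases hpa : p ∣ a
  · have hb : b ≤ N := by omega
    have hpent : ∀ t : ℤ, (b : ℤ) ≠ t * (3 * t - 1) := by
      intro t heq
      obtain ⟨c, hc⟩ := hpa
      apply hqnr (6 * t - 1)
      have hb' : (b : ℤ) = (p : ℤ) * n + r - (p : ℤ) * c := by
        have h1 : (a : ℤ) + (b : ℤ) = (p : ℤ) * n + r := by exact_mod_cast hab
        have h2 : (a : ℤ) = (p : ℤ) * c := by exact_mod_cast hc
        linarith
      refine Int.modEq_iff_dvd.mpr ⟨12 * (c : ℤ) - 12 * n, ?_⟩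
      push_cast
      linear_combination 12 * heq - 12 * hb'
    rw [coeff_prod_one_sub N b hb hpent, mul_zero]
  · have hG : PSupp p (∏ m ∈ Finset.range (N + 1),
        geom (ZMod p) (p * (2 * m + 1)) ^ (k + 1) *
          geom (ZMod p) (p * (2 * m + 2)) ^ (k - j + 1)) := by
      refine Finset.prod_induction _ (PSupp p) (fun f g hf hg => PSupp_mul p hf hg)
        (PSupp_one p) (fun m _ => ?_)
      exact PSupp_mul p (PSupp_pow p (PSupp_geom p _) _) (PSupp_pow p (PSupp_geom p _) _)
    rw [hG a hpa, zero_mul]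
end

section
/- Let p ≥ 3 be a prime and let r be an integer with 1 ≤ r ≤ p-1 such that 8r+1 is a quadratic non-residue modulo p. Then for all integers n ≥ 0 and all integers k ≥ j ≥ 0, a_{p(k-j)+(p-1), pk+(p+1)}(pn+r) ≡ 0 (mod p). -/
open PowerSeries Finset

namespace CPAux

/-- triangular numbers -/
def tri : ℕ → ℕ
  | 0 => 0
  | n+1 => tri n + n + 1

lemma two_tri (t : ℕ) : 2 * tri t = t * (t + 1) := by
  induction t with
  | zero => rfl
  | succ n ih => simp only [tri]; ring_nf; ring_nf at ih; omega

/-- centered triangular exponent -/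
def TT (i N : ℕ) : ℕ := if N ≤ i then tri (i - N) else tri (N - i - 1)

lemma tri_succ (n : ℕ) : tri (n+1) = tri n + n + 1 := rfl

lemma e1 (i N : ℕ) : TT i (N+1) + i = N + TT i N := by
  unfold TT
  rcases le_or_gt (N+1) i with h | h
  · rw [if_pos h, if_pos (by omega)]
    have h2 : i - N = (i - (N+1)) + 1 := by omega
    rw [h2, tri_succ]; omega
  · rcases le_or_gt N i with h3 | h3
    · have : i = N := by omega
      subst this
      rw [if_neg (by omega), if_pos le_rfl]
      simp [Nat.sub_self, tri]
    · rw [if_neg (by omega), if_neg (by omega)]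
      have h2 : N + 1 - i - 1 = (N - i - 1) + 1 := by omega
      rw [h2, tri_succ]; omega

lemma e2 (i N : ℕ) : TT (i+1) (N+1) = TT i N := by
  unfold TT
  rcases le_or_gt N i with h | h
  · rw [if_pos (by omega), if_pos h]
    congr 1; omega
  · rw [if_neg (by omega), if_neg (by omega)]
    congr 1; omega

lemma e3 (i N : ℕ) (h : i ≤ 2*N) :
    TT (i+2) (N+1) + (2*N - i) = N + 1 + TT i N := by
  unfold TT
  rcases le_or_gt N i with h1 | h1
  · rw [if_pos (by omega), if_pos h1]
    have h2 : i + 2 - (N+1) = (i - N) + 1 := by omega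
    rw [h2, tri_succ]; omega
  · rcases Nat.eq_or_lt_of_le (Nat.succ_le_of_lt h1) with h2 | h2
    · -- i + 1 = N
      rw [if_pos (by omega), if_neg (by omega)]
      have e1 : i + 2 - (N+1) = 0 := by omega
      have e2 : N - i - 1 = 0 := by omega
      rw [e1, e2]; simp [tri]; omega
    · rw [if_neg (by omega), if_neg (by omega)]
      have h3 : N - i - 1 = (N + 1 - (i+2) - 1) + 1 := by omega
      rw [h3, tri_succ]; omega

/-- Gaussian binomial `[M choose i]_q` as a power series over ℤ. -/
noncomputable def GB : ℕ → ℕ → PowerSeries ℤ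
  | 0, 0 => 1
  | 0, _+1 => 0
  | M+1, 0 => GB M 0
  | M+1, i+1 => GB M (i+1) + X^(M - i) * GB M i

lemma GB_succ_succ (M i : ℕ) : GB (M+1) (i+1) = GB M (i+1) + X^(M - i) * GB M i := by
  rw [GB]

lemma GB_zero_right (M : ℕ) : GB M 0 = 1 := by
  induction M with
  | zero => rfl
  | succ n ih => rw [GB, ih]

lemma GB_eq_zero {M i : ℕ} (h : M < i) : GB M i = 0 := by
  induction M generalizing i with
  | zero => rcases i with _ | i; · omega
            rfl
  | succ n ih =>
    rcases i with _ | i; · omega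
    rw [GB_succ_succ, ih (by omega), ih (by omega), mul_zero, add_zero]

lemma GB_diag (M : ℕ) : GB M M = 1 := by
  induction M with
  | zero => rfl
  | succ n ih =>
    rw [GB_succ_succ, GB_eq_zero (by omega), ih, zero_add, Nat.sub_self, pow_zero, one_mul]

lemma GB_one (M : ℕ) : GB M 1 = ∑ j ∈ range M, (X : PowerSeries ℤ)^j := by
  induction M with
  | zero => simp [GB_eq_zero]
  | succ n ih =>
    rw [GB_succ_succ, ih, GB_zero_right, Nat.sub_zero, mul_one, sum_range_succ]

lemma GB_pascal2 (M i : ℕ) : GB (M+1) (i+1) = GB M i + X^(i+1) * GB M (i+1) := by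
  induction M generalizing i with
  | zero =>
    rcases i with _ | i
    · rw [GB_succ_succ, GB_eq_zero (by omega), GB_zero_right]
      simp
    · rw [GB_eq_zero (by omega), GB_eq_zero (by omega), GB_eq_zero (by omega)]
      simp
  | succ M ih =>
    rcases i with _ | j
    · -- i = 0 case
      rw [GB_succ_succ, GB_one, GB_zero_right, Nat.sub_zero, mul_one, pow_one]
      rw [← sum_range_succ, sum_range_succ' (fun j => (X : PowerSeries ℤ)^j) (M+1), mul_sum]
      simp only [pow_zero, pow_succ']
      ring
    · -- i = j+1
      have hL : GB (M+2) (j+2) = GB (M+1) (j+2) + X^(M-j) * GB (M+1) (j+1) := by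
        have h : M + 1 - (j+1) = M - j := by omega
        rw [GB_succ_succ, h]
      rw [hL]
      conv_lhs => rw [ih (j+1), ih j]
      conv_rhs => rw [GB_succ_succ M j, GB_succ_succ M (j+1)]
      rcases le_or_gt M j with h | h
      · rw [GB_eq_zero (show M < j+1 by omega), GB_eq_zero (show M < j+2 by omega)]
        ring
      · have h1 : (X : PowerSeries ℤ)^(M-j) * X^(j+1) = X^(M+1) := by
          rw [← pow_add]; congr 1; omega
        have h2 : (X : PowerSeries ℤ)^(j+2) * X^(M-(j+1)) = X^(M+1) := by
          rw [← pow_add]; congr 1; omega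
        calc GB M (j+1) + X ^ (j+1+1) * GB M (j+1+1) + X^(M-j) * (GB M j + X^(j+1) * GB M (j+1))
            = GB M (j+1) + X^(M-j) * GB M j + (X ^ (j+2) * GB M (j+2)
              + (X^(M-j) * X^(j+1)) * GB M (j+1)) := by ring
          _ = GB M (j+1) + X^(M-j) * GB M j + (X ^ (j+2) * GB M (j+2)
              + (X^(j+2) * X^(M-(j+1))) * GB M (j+1)) := by rw [h1, h2]
          _ = _ := by ring

lemma GB_key (M : ℕ) : ∀ i ≤ M,
    GB M i * ∏ m ∈ range (M - i), (1 - (X : PowerSeries ℤ)^(m+1))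
      = ∏ m ∈ range (M - i), (1 - (X : PowerSeries ℤ)^(i+1+m)) := by
  induction M with
  | zero =>
    intro i hi
    interval_cases i
    simp [GB_zero_right]
  | succ M ih =>
    intro i hi
    rcases i with _ | i'
    · -- i = 0
      rw [GB_zero_right, one_mul]
      apply Finset.prod_congr rfl
      intro m _
      have : 0 + 1 + m = m + 1 := by omega
      rw [this]
    · rcases Nat.eq_or_lt_of_le hi with h | h
      · -- i = M + 1
        rw [h, GB_diag, Nat.sub_self]
        simp
      · -- 1 ≤ i = i'+1 ≤ M
        have hi' : i' + 1 ≤ M := by omega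
        have hsub : M + 1 - (i'+1) = (M - (i'+1)) + 1 := by omega
        rw [GB_succ_succ, hsub, add_mul]
        have e7 : M - (i'+1) + 1 = M - i' := by omega
        have h1 : GB M (i'+1) * ∏ m ∈ range (M - (i'+1) + 1), (1 - (X : PowerSeries ℤ)^(m+1))
            = (∏ m ∈ range (M - (i'+1)), (1 - (X : PowerSeries ℤ)^(i'+1+1+m)))
              * (1 - X^(M - i')) := by
          rw [prod_range_succ, ← mul_assoc, ih (i'+1) hi', e7]
        have h3 : X^(M - i') * GB M i'
              * ∏ m ∈ range (M - (i'+1) + 1), (1 - (X : PowerSeries ℤ)^(m+1))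
            = X^(M - i') * ((1 - X^(i'+1))
              * ∏ m ∈ range (M - (i'+1)), (1 - (X : PowerSeries ℤ)^(i'+1+1+m))) := by
          rw [e7, mul_assoc, ih i' (by omega)]
          rw [← e7, prod_range_succ' (fun m => (1 - (X : PowerSeries ℤ)^(i'+1+m))) (M - (i'+1))]
          have hp : (∏ m ∈ range (M - (i'+1)), (1 - (X : PowerSeries ℤ)^(i'+1+(m+1))))
              = ∏ m ∈ range (M - (i'+1)), (1 - (X : PowerSeries ℤ)^(i'+1+1+m)) :=
            Finset.prod_congr rfl (fun m _ => by rw [show i'+1+(m+1) = i'+1+1+m from by omega])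
          rw [hp, add_zero]
          ring
        have hR : (∏ m ∈ range (M - (i'+1) + 1), (1 - (X : PowerSeries ℤ)^(i'+1+1+m)))
            = (∏ m ∈ range (M - (i'+1)), (1 - (X : PowerSeries ℤ)^(i'+1+1+m)))
              * (1 - X^(M+1)) := by
          rw [prod_range_succ]
          have e5 : i' + 1 + 1 + (M - (i'+1)) = M + 1 := by omega
          rw [e5]
        rw [h1, h3, hR]
        have e6 : (X : PowerSeries ℤ)^(M - i') * X^(i'+1) = X^(M+1) := by
          rw [← pow_add]; congr 1; omega
        calc (∏ m ∈ range (M - (i'+1)), (1 - (X : PowerSeries ℤ)^(i'+1+1+m))) * (1 - X^(M - i'))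
              + X^(M-i') * ((1 - X^(i'+1))
                * ∏ m ∈ range (M - (i'+1)), (1 - (X : PowerSeries ℤ)^(i'+1+1+m)))
            = (∏ m ∈ range (M - (i'+1)), (1 - (X : PowerSeries ℤ)^(i'+1+1+m)))
              * (1 - X^(M-i') * X^(i'+1)) := by ring
          _ = _ := by rw [e6]

/-- terms of the Gauss sum -/
noncomputable def aa (N i : ℕ) : PowerSeries ℤ := X^(TT i N) * GB (2*N) i

/-- the Gauss sum -/
noncomputable def SS (N : ℕ) : PowerSeries ℤ := ∑ i ∈ range (2*N+1), aa N i

lemma aa_eq_zero {N i : ℕ} (h : 2*N < i) : aa N i = 0 := by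
  rw [aa, GB_eq_zero h, mul_zero]

lemma qid0 (N : ℕ) : X^(TT 0 (N+1)) * GB (2*N+2) 0 = X^N * aa N 0 := by
  rw [aa, GB_zero_right, GB_zero_right, mul_one, mul_one, ← pow_add]
  congr 1
  have := e1 0 N
  omega

lemma qid1 (N : ℕ) :
    X^(TT 1 (N+1)) * GB (2*N+2) 1
      = X^N * aa N 1 + (1 + X^(2*N+1)) * aa N 0 := by
  have h1 : GB (2*N+2) 1 = GB (2*N+1) 0 + X^1 * GB (2*N+1) 1 := GB_pascal2 (2*N+1) 0
  have h2 : GB (2*N+1) 1 = GB (2*N) 1 + X^(2*N) * GB (2*N) 0 := by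
    have := GB_succ_succ (2*N) 0
    simpa using this
  rw [h1, h2, GB_zero_right, GB_zero_right, aa, aa, GB_zero_right]
  have he2 : TT 0 N = TT 1 (N+1) := (e2 0 N).symm
  have he1 : N + TT 1 N = TT 1 (N+1) + 1 := by have := e1 1 N; omega
  rw [← he2]
  have hx1 : (X : PowerSeries ℤ)^(TT 0 N) * (X^1 * (GB (2*N) 1 + X^(2*N) * 1))
      = X^(TT 0 N) * X^1 * GB (2*N) 1 + X^(TT 0 N) * X^(2*N+1) := by
    rw [pow_succ]
    ring
  have hx2 : (X : PowerSeries ℤ)^(TT 0 N) * X^1 = X^N * X^(TT 1 N) := by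
    rw [← pow_add, ← pow_add, he2]
    congr 1
    omega
  calc X^(TT 0 N) * (1 + X^1 * (GB (2*N) 1 + X^(2*N) * 1))
      = X^(TT 0 N) + (X^(TT 0 N) * X^1 * GB (2*N) 1 + X^(TT 0 N) * X^(2*N+1)) := by
        rw [mul_add, mul_one, hx1]
    _ = X^(TT 0 N) + (X^N * X^(TT 1 N) * GB (2*N) 1 + X^(TT 0 N) * X^(2*N+1)) := by rw [hx2]
    _ = X^N * (X^(TT 1 N) * GB (2*N) 1) + (1 + X^(2*N+1)) * (X^(TT 0 N) * 1) := by ring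

lemma qid2 (N i : ℕ) :
    X^(TT (i+2) (N+1)) * GB (2*N+2) (i+2)
      = X^N * aa N (i+2) + (1 + X^(2*N+1)) * aa N (i+1) + X^(N+1) * aa N i := by
  rcases le_or_gt i (2*N) with hi | hi
  swap
  · -- i ≥ 2N+1 : everything vanishes
    rw [GB_eq_zero (show 2*N+2 < i+2 by omega), aa_eq_zero (show 2*N < i+2 by omega),
      aa_eq_zero (show 2*N < i+1 by omega), aa_eq_zero hi]
    simp
  · have hT2 : TT (i+1) N = TT (i+2) (N+1) := (e2 (i+1) N).symm
    have hT1 : N + TT (i+2) N = TT (i+2) (N+1) + (i+2) := by have := e1 (i+2) N; omega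
    have hT3 : N + 1 + TT i N = TT (i+2) (N+1) + (2*N - i) := (e3 i N hi).symm
    have hp1 : GB (2*N+2) (i+2) = GB (2*N+1) (i+1) + X^(i+2) * GB (2*N+1) (i+2) :=
      GB_pascal2 (2*N+1) (i+1)
    have hp2 : GB (2*N+1) (i+1) = GB (2*N) (i+1) + X^(2*N - i) * GB (2*N) i :=
      GB_succ_succ (2*N) i
    have hp3 : GB (2*N+1) (i+2) = GB (2*N) (i+2) + X^(2*N - (i+1)) * GB (2*N) (i+1) :=
      GB_succ_succ (2*N) (i+1)
    rw [hp1, hp2, hp3, aa, aa, aa]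
    -- write everything with combined exponents
    have c1 : (X : PowerSeries ℤ)^(TT (i+2) (N+1)) * X^(i+2) = X^N * X^(TT (i+2) N) := by
      rw [← pow_add, ← pow_add]; congr 1; omega
    have c3 : (X : PowerSeries ℤ)^(TT (i+2) (N+1)) * X^(2*N-i) = X^(N+1) * X^(TT i N) := by
      rw [← pow_add, ← pow_add]; congr 1; omega
    rcases lt_or_ge i (2*N) with hi2 | hi2
    · have c2 : (X : PowerSeries ℤ)^(TT (i+2) (N+1)) * X^(i+2) * X^(2*N-(i+1))
          = X^(2*N+1) * X^(TT (i+1) N) := by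
        rw [← pow_add, ← pow_add, ← pow_add, hT2]; congr 1; omega
      calc X^(TT (i+2) (N+1)) * (GB (2*N) (i+1) + X^(2*N-i) * GB (2*N) i
              + X^(i+2) * (GB (2*N) (i+2) + X^(2*N-(i+1)) * GB (2*N) (i+1)))
          = X^(TT (i+2) (N+1)) * GB (2*N) (i+1)
            + (X^(TT (i+2) (N+1)) * X^(2*N-i)) * GB (2*N) i
            + (X^(TT (i+2) (N+1)) * X^(i+2)) * GB (2*N) (i+2)
            + (X^(TT (i+2) (N+1)) * X^(i+2) * X^(2*N-(i+1))) * GB (2*N) (i+1) := by ring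
        _ = X^(TT (i+1) N) * GB (2*N) (i+1)
            + (X^(N+1) * X^(TT i N)) * GB (2*N) i
            + (X^N * X^(TT (i+2) N)) * GB (2*N) (i+2)
            + (X^(2*N+1) * X^(TT (i+1) N)) * GB (2*N) (i+1) := by rw [c2, c1, c3, ← hT2]
        _ = _ := by ring
    · -- i = 2N exactly
      have hieq : i = 2*N := by omega
      subst hieq
      rw [GB_eq_zero (show 2*N < 2*N+1 by omega), GB_eq_zero (show 2*N < 2*N+2 by omega)]
      calc X^(TT (2*N+2) (N+1)) * ((0:PowerSeries ℤ) + X^(2*N-2*N) * GB (2*N) (2*N)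
              + X^(2*N+2) * (0 + X^(2*N-(2*N+1)) * 0))
          = (X^(TT (2*N+2) (N+1)) * X^(2*N-2*N)) * GB (2*N) (2*N) := by ring
        _ = (X^(N+1) * X^(TT (2*N) N)) * GB (2*N) (2*N) := by rw [c3]
        _ = _ := by ring

lemma SS_zero : SS 0 = 1 := by
  rw [SS]
  simp [aa, TT, GB_zero_right, tri]

lemma SS_succ (N : ℕ) : SS (N+1) = (1 + X^N) * (1 + X^(N+1)) * SS N := by
  have hrw : SS (N+1) = ∑ i ∈ range (2*N+3), X^(TT i (N+1)) * GB (2*N+2) i := by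
    rw [SS]
    apply Finset.sum_congr (by rw [show 2*(N+1)+1 = 2*N+3 from by omega])
    intro i _
    rw [aa, show 2*(N+1) = 2*N+2 from by omega]
  rw [hrw]
  rw [sum_range_succ' (fun i => X^(TT i (N+1)) * GB (2*N+2) i) (2*N+2)]
  rw [sum_range_succ' (fun i => X^(TT (i+1) (N+1)) * GB (2*N+2) (i+1)) (2*N+1)]
  have hsum : ∑ i ∈ range (2*N+1), X^(TT (i+1+1) (N+1)) * GB (2*N+2) (i+1+1)
      = X^N * (∑ i ∈ range (2*N+1), aa N (i+2))
        + (1 + X^(2*N+1)) * (∑ i ∈ range (2*N+1), aa N (i+1))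
        + X^(N+1) * (∑ i ∈ range (2*N+1), aa N i) := by
    rw [mul_sum, mul_sum, mul_sum, ← sum_add_distrib, ← sum_add_distrib]
    apply Finset.sum_congr rfl
    intro i _
    exact qid2 N i
  rw [hsum, qid1 N, qid0 N]
  -- now express the shifted sums via SS N
  have hs0 : ∑ i ∈ range (2*N+1), aa N i = SS N := rfl
  have hs1 : ∑ i ∈ range (2*N+1), aa N (i+1) + aa N 0 = SS N := by
    rw [SS, sum_range_succ' (aa N) (2*N)]
    rw [sum_range_succ]
    rw [aa_eq_zero (show 2*N < 2*N+1 by omega), add_zero]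
  have hs2 : ∑ i ∈ range (2*N+1), aa N (i+2) + aa N 1 + aa N 0 = SS N := by
    have expand : ∑ i ∈ range (2*N+3), aa N i = SS N := by
      rw [SS]
      rw [show 2*N+3 = (2*N+1)+1+1 by omega]
      rw [sum_range_succ, sum_range_succ]
      rw [aa_eq_zero (show 2*N < 2*N+1 by omega), aa_eq_zero (show 2*N < 2*N+2 by omega)]
      simp
    rw [← expand]
    rw [sum_range_succ' (aa N) (2*N+2), sum_range_succ' (fun i => aa N (i+1)) (2*N+1)]
  calc X^N * (∑ i ∈ range (2*N+1), aa N (i+2))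
        + (1 + X^(2*N+1)) * (∑ i ∈ range (2*N+1), aa N (i+1))
        + X^(N+1) * (∑ i ∈ range (2*N+1), aa N i)
        + (X^N * aa N 1 + (1 + X^(2*N+1)) * aa N 0) + X^N * aa N 0
      = X^N * (∑ i ∈ range (2*N+1), aa N (i+2) + aa N 1 + aa N 0)
        + (1 + X^(2*N+1)) * (∑ i ∈ range (2*N+1), aa N (i+1) + aa N 0)
        + X^(N+1) * (∑ i ∈ range (2*N+1), aa N i) := by ring
    _ = X^N * SS N + (1 + X^(2*N+1)) * SS N + X^(N+1) * SS N := by rw [hs0, hs1, hs2]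
    _ = (1 + X^N) * (1 + X^(N+1)) * SS N := by
        have : (X:PowerSeries ℤ)^N * X^(N+1) = X^(2*N+1) := by rw [← pow_add]; congr 1; omega
        calc X^N * SS N + (1 + X^(2*N+1)) * SS N + X^(N+1) * SS N
            = (1 + X^N + X^(N+1) + X^(2*N+1)) * SS N := by ring
          _ = (1 + X^N + X^(N+1) + X^N * X^(N+1)) * SS N := by rw [this]
          _ = _ := by ring

lemma SS_eq (N : ℕ) :
    SS N = (∏ j ∈ range N, (1 + (X:PowerSeries ℤ)^(j+1))) * ∏ j ∈ range N, (1 + (X:PowerSeries ℤ)^j) := by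
  induction N with
  | zero => simpa using SS_zero
  | succ N ih =>
    rw [SS_succ, ih, prod_range_succ, prod_range_succ]
    ring

lemma tri_ge (t : ℕ) : t ≤ tri t := by
  induction t with
  | zero => simp
  | succ n ih => rw [tri_succ]; omega

section TailLemmas

variable {R : Type*} [CommRing R]

lemma X_pow_dvd_prod_sub_one {K : ℕ} {s : Finset ℕ} {f : ℕ → PowerSeries R}
    (h : ∀ i ∈ s, (X : PowerSeries R)^K ∣ f i - 1) :
    (X : PowerSeries R)^K ∣ (∏ i ∈ s, f i) - 1 := by
  induction s using Finset.induction_on with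
  | empty => simp
  | @insert a s' hnotmem ih =>
    rw [Finset.prod_insert hnotmem]
    have h1 : (X : PowerSeries R)^K ∣ f a - 1 := h a (Finset.mem_insert_self a s')
    have h2 : (X : PowerSeries R)^K ∣ (∏ i ∈ s', f i) - 1 :=
      ih (fun i hi => h i (Finset.mem_insert_of_mem hi))
    have : f a * ∏ i ∈ s', f i - 1
        = f a * ((∏ i ∈ s', f i) - 1) + (f a - 1) := by ring
    rw [this]
    exact dvd_add (Dvd.dvd.mul_left h2 _) h1

lemma X_pow_dvd_mul_sub_one {K : ℕ} {f g : PowerSeries R}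
    (hf : (X : PowerSeries R)^K ∣ f - 1) (hg : (X : PowerSeries R)^K ∣ g - 1) :
    (X : PowerSeries R)^K ∣ f * g - 1 := by
  have : f * g - 1 = f * (g - 1) + (f - 1) := by ring
  rw [this]
  exact dvd_add (Dvd.dvd.mul_left hg _) hf

lemma coeff_zero_of_X_pow_dvd {K b : ℕ} {f : PowerSeries R}
    (h : (X : PowerSeries R)^K ∣ f) (hb : b < K) : coeff (R := R) b f = 0 :=
  (PowerSeries.X_pow_dvd_iff.mp h) b hb

lemma X_pow_dvd_one_sub_X_pow {K e : ℕ} (he : K ≤ e) :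
    (X : PowerSeries R)^K ∣ (1 - X^e) - 1 := by
  have : (1 - (X: PowerSeries R)^e) - 1 = -(X^e) := by ring
  rw [this]
  exact (pow_dvd_pow X he).neg_right

lemma X_pow_dvd_one_add_X_pow {K e : ℕ} (he : K ≤ e) :
    (X : PowerSeries R)^K ∣ (1 + X^e) - 1 := by
  have : (1 + (X: PowerSeries R)^e) - 1 = X^e := by ring
  rw [this]
  exact pow_dvd_pow X he

end TailLemmas

/-- the truncated Gauss product identity coefficient extraction -/
lemma L8 {l N : ℕ} (hl : l < N) (htri : ∀ t, tri t ≠ l) :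
    coeff (R := ℤ) l ((∏ m ∈ range (2*N), (1 - (X : PowerSeries ℤ)^(m+1))) * SS N) = 0 := by
  rw [SS, mul_sum, map_sum]
  apply Finset.sum_eq_zero
  intro i hi
  rw [mem_range] at hi
  have hi' : i ≤ 2*N := by omega
  -- rewrite the term as X^(TT i N) * U i
  have hsplit : (∏ m ∈ range (2*N), (1 - (X : PowerSeries ℤ)^(m+1)))
      = (∏ m ∈ range (2*N - i), (1 - (X : PowerSeries ℤ)^(m+1)))
        * ∏ m ∈ range i, (1 - (X : PowerSeries ℤ)^((2*N - i) + m + 1)) := by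
    have h2N : 2*N - i + i = 2*N := by omega
    conv_lhs => rw [← h2N, prod_range_add]
  set U : PowerSeries ℤ := (∏ m ∈ range (2*N - i), (1 - (X : PowerSeries ℤ)^(i+1+m)))
        * ∏ m ∈ range i, (1 - (X : PowerSeries ℤ)^((2*N - i) + m + 1)) with hU
  have hterm : (∏ m ∈ range (2*N), (1 - (X : PowerSeries ℤ)^(m+1))) * aa N i
      = X^(TT i N) * U := by
    rw [hsplit, aa, hU]
    calc (∏ m ∈ range (2*N - i), (1 - (X : PowerSeries ℤ)^(m+1)))
          * (∏ m ∈ range i, (1 - (X : PowerSeries ℤ)^((2*N - i) + m + 1)))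
          * (X^(TT i N) * GB (2*N) i)
        = X^(TT i N) * ((GB (2*N) i * ∏ m ∈ range (2*N - i), (1 - (X : PowerSeries ℤ)^(m+1)))
            * ∏ m ∈ range i, (1 - (X : PowerSeries ℤ)^((2*N - i) + m + 1))) := by ring
      _ = _ := by rw [GB_key (2*N) i hi']
  rw [hterm]
  -- tail divisibility for U
  have hmin1 : min i (2*N - i) ≤ i := min_le_left _ _
  have hmin2 : min i (2*N - i) ≤ 2*N - i := min_le_right _ _
  have hUdvd : (X : PowerSeries ℤ)^(min i (2*N - i) + 1) ∣ U - 1 := by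
    rw [hU]
    apply X_pow_dvd_mul_sub_one
    · apply X_pow_dvd_prod_sub_one
      intro m _
      exact X_pow_dvd_one_sub_X_pow (by omega)
    · apply X_pow_dvd_prod_sub_one
      intro m _
      exact X_pow_dvd_one_sub_X_pow (by omega)
  have hTTne : TT i N ≠ l := by
    unfold TT
    split_ifs <;> exact htri _
  rw [PowerSeries.coeff_X_pow_mul']
  split_ifs with hle
  · -- TT i N < l
    have hlt : TT i N < l := lt_of_le_of_ne hle hTTne
    have hb1 : l ≤ TT i N + i := by
      have h1 := tri_ge (i - N)
      have h2 := tri_ge (N - i - 1)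
      unfold TT
      split_ifs <;> omega
    have hb2 : l ≤ TT i N + (2*N - i) := by
      have h1 := tri_ge (i - N)
      have h2 := tri_ge (N - i - 1)
      unfold TT
      split_ifs <;> omega
    have hbound : l - TT i N ≤ min i (2*N - i) :=
      le_min (by omega) (by omega)
    have : U = (U - 1) + 1 := by ring
    rw [this, map_add]
    have z1 : coeff (R := ℤ) (l - TT i N) (U - 1) = 0 :=
      coeff_zero_of_X_pow_dvd hUdvd (by omega)
    have z2 : coeff (R := ℤ) (l - TT i N) (1 : PowerSeries ℤ) = 0 := by
      rw [PowerSeries.coeff_one, if_neg (by omega)]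
    rw [z1, z2, add_zero]
  · rfl

lemma prod_range_two_mul (f : ℕ → PowerSeries ℤ) (M : ℕ) :
    ∏ i ∈ range (2*M), f i = (∏ i ∈ range M, f (2*i)) * ∏ i ∈ range M, f (2*i+1) := by
  induction M with
  | zero => simp
  | succ M ih =>
    rw [show 2*(M+1) = 2*M+1+1 from by omega, prod_range_succ, prod_range_succ, ih,
      prod_range_succ, prod_range_succ]
    ring

lemma constC_one_sub {a : ℕ} (ha : 1 ≤ a) :
    constantCoeff (R := ℤ) (1 - X^a) = 1 := by
  rw [map_sub, map_one, map_pow, constantCoeff_X, zero_pow (by omega), sub_zero]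

lemma constC_one_add {a : ℕ} (ha : 1 ≤ a) :
    constantCoeff (R := ℤ) (1 + X^a) = 1 := by
  rw [map_add, map_one, map_pow, constantCoeff_X, zero_pow (by omega), add_zero]

lemma inv_mul_self {a : ℕ} (ha : 1 ≤ a) :
    invOfUnit (1 - (X : PowerSeries ℤ)^a) 1 * (1 - X^a) = 1 :=
  invOfUnit_mul _ 1 (by rw [constC_one_sub ha, Units.val_one])

/-- the partition-like product over ℤ -/
noncomputable def BB (M : ℕ) : PowerSeries ℤ :=
  ∏ m ∈ range M, (invOfUnit (1 - X^(2*m+1)) 1 * (1 - X^(2*m+2)))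

lemma core (M b : ℕ) (hb : b < M) (htri : ∀ t, tri t ≠ b) :
    coeff (R := ℤ) b (BB M) = 0 := by
  obtain ⟨m', rfl⟩ : ∃ m', M = m'+1 := ⟨M - 1, by omega⟩
  set M := m' + 1
  set DD : PowerSeries ℤ := ∏ m ∈ range M, (1 - X^(2*m+1)) with hDD
  set PP : PowerSeries ℤ := ∏ m ∈ range M, (1 - X^(2*m+2)) with hPP
  set EE : PowerSeries ℤ := ∏ m ∈ range (2*M), (1 + X^(m+1)) with hEE
  set W : PowerSeries ℤ := ∏ m ∈ range M, (1 - X^(2*M+2*m+2)) with hW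
  set E1 : PowerSeries ℤ := ∏ j ∈ range M, (1 + X^(j+1)) with hE1
  set E0 : PowerSeries ℤ := ∏ j ∈ range m', (1 + X^(j+1)) with hE0
  set T1 : PowerSeries ℤ := ∏ x ∈ range M, (1 + X^(M+x+1)) with hT1
  set G : PowerSeries ℤ := (∏ j ∈ range M, (1 + X^(j+1))) * ∏ j ∈ range M, (1 + X^j) with hG
  -- (i) BB M * DD = PP
  have h1 : BB M * DD = PP := by
    rw [BB, hDD, hPP, ← prod_mul_distrib]
    apply Finset.prod_congr rfl
    intro m _
    calc invOfUnit (1 - (X:PowerSeries ℤ)^(2*m+1)) 1 * (1 - X^(2*m+2)) * (1 - X^(2*m+1))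
        = invOfUnit (1 - (X:PowerSeries ℤ)^(2*m+1)) 1 * (1 - X^(2*m+1)) * (1 - X^(2*m+2)) := by
          ring
      _ = 1 * (1 - X^(2*m+2)) := by rw [inv_mul_self (by omega)]
      _ = 1 - X^(2*m+2) := one_mul _
  -- (ii) DD * PP = full odd-even product
  have h2 : DD * PP = ∏ m ∈ range (2*M), (1 - (X:PowerSeries ℤ)^(m+1)) := by
    rw [prod_range_two_mul (fun m => 1 - (X:PowerSeries ℤ)^(m+1)) M, hDD, hPP]
  -- (iii) EE * (DD * PP) = PP * W
  have h3 : EE * (DD * PP) = PP * W := by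
    rw [h2, hEE, ← prod_mul_distrib]
    have hfac : ∀ m:ℕ, (1 + (X:PowerSeries ℤ)^(m+1)) * (1 - X^(m+1)) = 1 - X^(2*m+2) := by
      intro m
      have : (X:PowerSeries ℤ)^(m+1) * X^(m+1) = X^(2*m+2) := by
        rw [← pow_add]; congr 1; omega
      calc (1 + (X:PowerSeries ℤ)^(m+1)) * (1 - X^(m+1))
          = 1 - X^(m+1) * X^(m+1) := by ring
        _ = 1 - X^(2*m+2) := by rw [this]
    calc ∏ m ∈ range (2*M), ((1 + (X:PowerSeries ℤ)^(m+1)) * (1 - X^(m+1)))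
        = ∏ m ∈ range (2*M), (1 - (X:PowerSeries ℤ)^(2*m+2)) :=
          Finset.prod_congr rfl (fun m _ => hfac m)
      _ = PP * W := by
          rw [show 2*M = M + M from by omega, prod_range_add, hPP, hW]
          congr 1
          apply Finset.prod_congr rfl
          intro x _
          rw [show 2*(M+x)+2 = 2*M+2*x+2 from by omega]
  -- (iv) cancel PP : DD * EE = W
  have hPPne : PP ≠ 0 := by
    intro h
    have : constantCoeff (R := ℤ) PP = 1 := by
      rw [hPP, map_prod]
      apply Finset.prod_eq_one
      intro m _
      exact constC_one_sub (by omega)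
    rw [h, map_zero] at this
    exact zero_ne_one this
  have h4 : DD * EE = W := by
    apply mul_right_cancel₀ hPPne
    calc DD * EE * PP = EE * (DD * PP) := by ring
      _ = PP * W := h3
      _ = W * PP := by ring
  -- tail divisibilities
  have hWdvd : (X:PowerSeries ℤ)^(2*M+2) ∣ W - 1 := by
    rw [hW]
    apply X_pow_dvd_prod_sub_one
    intro m _
    exact X_pow_dvd_one_sub_X_pow (by omega)
  have hT1dvd : (X:PowerSeries ℤ)^(M+1) ∣ T1 - 1 := by
    rw [hT1]
    apply X_pow_dvd_prod_sub_one
    intro m _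
    exact X_pow_dvd_one_add_X_pow (by omega)
  -- EE inverse
  have hEEc : constantCoeff (R := ℤ) EE = 1 := by
    rw [hEE, map_prod]
    apply Finset.prod_eq_one
    intro m _
    exact constC_one_add (by omega)
  set EI : PowerSeries ℤ := invOfUnit EE 1 with hEI
  have hEEEI : EE * EI = 1 := mul_invOfUnit _ 1 (by rw [hEEc, Units.val_one])
  -- divisibility of W*W*G - 2*EE*EE
  have hGsplit : G - 2*(EE*EE) = 2*E1*E0*((1 - T1*T1) - X^M*(T1*T1)) := by
    have hGe : G = E1 * (E0 * 2) := by
      rw [hG, hE1, hE0]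
      congr 1
      rw [prod_range_succ' (fun j => 1 + (X:PowerSeries ℤ)^j) m']
      rw [pow_zero]
      norm_num
    have hEEe : EE = E1 * T1 := by
      rw [hEE, hE1, hT1, show 2*M = M + M from by omega, prod_range_add]
    have hE1e : E1 = E0 * (1 + X^M) := by
      rw [hE1, hE0, prod_range_succ]
    calc G - 2*(EE*EE) = E1 * (E0 * 2) - 2*((E1*T1)*(E1*T1)) := by rw [hGe, hEEe]
      _ = 2*E1*E0 - 2*E1*(E0*(1+X^M))*(T1*T1) := by rw [← hE1e]; ring
      _ = 2*E1*E0*((1 - T1*T1) - X^M*(T1*T1)) := by ring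
  have hdvd2 : (X:PowerSeries ℤ)^(b+1) ∣ W*W*G - 2*(EE*EE) := by
    have hsplit : W*W*G - 2*(EE*EE) = (W*W - 1)*G + (G - 2*(EE*EE)) := by ring
    rw [hsplit]
    apply dvd_add
    · have : W*W - 1 = (W - 1)*(W + 1) := by ring
      rw [this]
      exact dvd_trans (pow_dvd_pow X (by omega))
        ((hWdvd.mul_right _).mul_right _)
    · rw [hGsplit]
      have hA : (X:PowerSeries ℤ)^M ∣ (1 - T1*T1) := by
        have : (1 : PowerSeries ℤ) - T1*T1 = (1 - T1)*(1 + T1) := by ring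
        rw [this]
        apply Dvd.dvd.mul_right
        have : (1 : PowerSeries ℤ) - T1 = -(T1 - 1) := by ring
        rw [this]
        exact (dvd_trans (pow_dvd_pow X (by omega)) hT1dvd).neg_right
      have hB : (X:PowerSeries ℤ)^M ∣ (1 - T1*T1) - X^M*(T1*T1) :=
        dvd_sub hA (Dvd.dvd.mul_right (dvd_refl _) _)
      exact dvd_trans (pow_dvd_pow X (by omega)) (hB.mul_left _)
  -- main divisibility
  have hdvd : (X:PowerSeries ℤ)^(b+1) ∣ DD*DD*G - 2 := by
    have key : DD*DD*G - 2 = EI*EI*(W*W*G - 2*(EE*EE)) := by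
      have expand : EI*EI*(W*W*G - 2*(EE*EE))
          = (EE*EI)*(EE*EI)*(DD*DD*G) - 2*((EE*EI)*(EE*EI)) := by
        rw [← h4]; ring
      rw [expand, hEEEI]; ring
    rw [key]
    exact hdvd2.mul_left _
  -- assemble
  have hT0 : (∏ m ∈ range (2*M), (1 - (X:PowerSeries ℤ)^(m+1))) * SS M
      = BB M * (DD*DD*G) := by
    rw [← h2, SS_eq, ← hG, ← h1]
    ring
  have hzero : coeff (R := ℤ) b ((∏ m ∈ range (2*M), (1 - (X:PowerSeries ℤ)^(m+1))) * SS M) = 0 :=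
    L8 hb htri
  rw [hT0] at hzero
  have hsplit2 : BB M * (DD*DD*G) = (BB M + BB M) + BB M * (DD*DD*G - 2) := by ring
  rw [hsplit2, map_add, map_add] at hzero
  have hz2 : coeff (R := ℤ) b (BB M * (DD*DD*G - 2)) = 0 :=
    coeff_zero_of_X_pow_dvd (hdvd.mul_left _) (by omega)
  rw [hz2, add_zero] at hzero
  omega

section ModP

variable {R : Type*} [CommRing R]

lemma constC_one_sub' {a : ℕ} (ha : 1 ≤ a) :
    constantCoeff (R := R) (1 - X^a) = 1 := by
  rw [map_sub, map_one, map_pow, constantCoeff_X, zero_pow (by omega), sub_zero]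

lemma inv_mul_self' {a : ℕ} (ha : 1 ≤ a) :
    invOfUnit (1 - (X : PowerSeries R)^a) 1 * (1 - X^a) = 1 :=
  invOfUnit_mul _ 1 (by rw [constC_one_sub' ha, Units.val_one])

lemma inv_unique {u a b : PowerSeries R} (h1 : a * u = 1) (h2 : b * u = 1) : a = b := by
  calc a = a * (b * u) := by rw [h2, mul_one]
    _ = b * (a * u) := by ring
    _ = b := by rw [h1, mul_one]

variable (p : ℕ) [hpi : Fact p.Prime]

instance charP_psZMod : CharP (PowerSeries (ZMod p)) p := by
  constructor
  intro x
  constructor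
  · intro h
    have h2 : (C (R := ZMod p)) ((x:ℕ) : ZMod p) = 0 := by
      rw [map_natCast (C (R := ZMod p)) x, h]
    have h3 : ((x:ℕ) : ZMod p) = 0 := by
      have := congrArg (constantCoeff (R := ZMod p)) h2
      rwa [constantCoeff_C, map_zero] at this
    exact (ZMod.natCast_eq_zero_iff x p).mp h3
  · intro h
    have h3 : ((x:ℕ) : ZMod p) = 0 := (ZMod.natCast_eq_zero_iff x p).mpr h
    rw [← map_natCast (C (R := ZMod p)) x, h3, map_zero]

lemma frob (hodd : Odd p) (a : ℕ) :
    ((1 - X^a : PowerSeries (ZMod p)))^p = 1 - X^(a*p) := by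
  have h1 : (1 - X^a : PowerSeries (ZMod p)) = 1 + (-(X^a)) := by ring
  rw [h1, add_pow_char, one_pow, hodd.neg_pow, ← pow_mul]
  ring

/-- notation for inverses over ZMod p -/
noncomputable def gg (a : ℕ) : PowerSeries (ZMod p) := invOfUnit (1 - X^a) 1

lemma gg_mul (a : ℕ) (ha : 1 ≤ a) : gg p a * (1 - X^a) = 1 := inv_mul_self' ha

lemma gg_pow (hodd : Odd p) (a : ℕ) (ha : 1 ≤ a) : (gg p a)^p = gg p (a*p) := by
  have hp1 : 1 ≤ p := hpi.out.one_lt.le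
  apply inv_unique (u := 1 - X^(a*p))
  · rw [← frob p hodd a, ← mul_pow, gg_mul p a ha, one_pow]
  · exact gg_mul p _ (Nat.mul_pos (by omega) hpi.out.pos)

/-- coefficients supported on multiples of p -/
def Psupp (f : PowerSeries (ZMod p)) : Prop :=
  ∀ i : ℕ, ¬ (p ∣ i) → coeff (R := ZMod p) i f = 0

lemma Psupp_one : Psupp p (1 : PowerSeries (ZMod p)) := by
  intro i hi
  rw [PowerSeries.coeff_one, if_neg (by rintro rfl; exact hi (dvd_zero p))]

lemma Psupp_mul {f g : PowerSeries (ZMod p)} (hf : Psupp p f) (hg : Psupp p g) :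
    Psupp p (f * g) := by
  intro i hi
  rw [PowerSeries.coeff_mul]
  apply Finset.sum_eq_zero
  intro x hx
  rw [Finset.HasAntidiagonal.mem_antidiagonal] at hx
  by_cases h : p ∣ x.1
  · have : ¬ p ∣ x.2 := by
      intro h2
      exact hi (hx ▸ dvd_add h h2)
    rw [hg x.2 this, mul_zero]
  · rw [hf x.1 h, zero_mul]

lemma Psupp_pow {f : PowerSeries (ZMod p)} (hf : Psupp p f) (k : ℕ) :
    Psupp p (f ^ k) := by
  induction k with
  | zero => simpa using Psupp_one p
  | succ k ih => rw [pow_succ]; exact Psupp_mul p ih hf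

lemma Psupp_gg (hodd : Odd p) (a : ℕ) (ha : 1 ≤ a) : Psupp p (gg p (a*p)) := by
  have hap : 1 ≤ a*p := Nat.mul_pos (by omega) hpi.out.pos
  have hself : gg p (a*p) = 1 + X^(a*p) * gg p (a*p) := by
    have h := gg_mul p (a*p) hap
    calc gg p (a*p) = gg p (a*p) * (1 - X^(a*p)) + X^(a*p) * gg p (a*p) := by ring
      _ = 1 + X^(a*p) * gg p (a*p) := by rw [h]
  intro i hi
  induction i using Nat.strong_induction_on with
  | _ i ih =>
    rw [hself]
    rw [map_add, PowerSeries.coeff_one, if_neg (by rintro rfl; exact hi (dvd_zero p)),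
      PowerSeries.coeff_X_pow_mul']
    split_ifs with h
    · rw [zero_add]
      have hlt : i - a*p < i := by
        have h0 : 0 < a*p := Nat.mul_pos (by omega) hpi.out.pos
        omega
      have hnd : ¬ p ∣ (i - a*p) := by
        intro hd
        apply hi
        have : i = (i - a*p) + a*p := by omega
        rw [this]
        exact dvd_add hd (dvd_mul_left p a)
      exact ih _ hlt hnd
    · rw [zero_add]

end ModP

section Final

variable (p : ℕ) [hpi : Fact p.Prime]

/-- the partition-like product over ZMod p -/
noncomputable def BBz (M : ℕ) : PowerSeries (ZMod p) :=
  ∏ m ∈ range M, (gg p (2*m+1) * (1 - X^(2*m+2)))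

lemma map_inv (a : ℕ) (ha : 1 ≤ a) :
    PowerSeries.map (Int.castRingHom (ZMod p)) (invOfUnit (1 - X^a) 1) = gg p a := by
  apply inv_unique (u := 1 - (X : PowerSeries (ZMod p))^a)
  · have h := inv_mul_self ha
    have h2 := congrArg (PowerSeries.map (Int.castRingHom (ZMod p))) h
    rwa [map_mul, map_one, map_sub, map_one, map_pow, PowerSeries.map_X] at h2
  · exact gg_mul p a ha

lemma map_BB (M : ℕ) :
    PowerSeries.map (Int.castRingHom (ZMod p)) (BB M) = BBz p M := by
  rw [BB, BBz, map_prod]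
  apply Finset.prod_congr rfl
  intro m _
  rw [map_mul, map_inv p _ (by omega), map_sub, map_one, map_pow, PowerSeries.map_X]

lemma coeff_BBz_eq_zero (M b : ℕ) (hb : b < M) (htri : ∀ t, tri t ≠ b) :
    coeff (R := ZMod p) b (BBz p M) = 0 := by
  rw [← map_BB, PowerSeries.coeff_map, core M b hb htri, map_zero]

end Final

end CPAux

open CPAux PowerSeries Finset in
theorem stmt11 (p : ℕ) (hp : p.Prime) (hp3 : 3 ≤ p)
    (r : ℕ) (hr1 : 1 ≤ r) (hr2 : r ≤ p - 1)
    (hqnr : ∀ x : ℤ, ¬ x ^ 2 ≡ (8 * r + 1 : ℕ) [ZMOD p])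
    (n j k : ℕ) (hjk : j ≤ k) :
    colorPart (p * (k - j) + (p - 1)) (p * k + (p + 1)) (p * n + r) ≡ 0 [ZMOD p] := by
  haveI : Fact p.Prime := ⟨hp⟩
  have hodd : Odd p := hp.odd_of_ne_two (by omega)
  have hp1 : 1 ≤ p := by omega
  set L : ℕ := p * n + r with hL
  set s' : ℕ := p * k + (p + 1) with hs'
  set r' : ℕ := p * (k - j) + (p - 1) with hr'
  set kj : ℕ := k - j with hkj
  have hred : ((colorPart r' s' L : ℤ) : ZMod p) = ((0:ℤ) : ZMod p) →
      colorPart r' s' L ≡ 0 [ZMOD p] := fun h => (ZMod.intCast_eq_intCast_iff _ _ _).mp h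
  apply hred
  rw [Int.cast_zero]
  simp only [colorPart]
  set F : PowerSeries ℤ := ∏ m ∈ Finset.range (L + 1),
      (PowerSeries.invOfUnit (1 - PowerSeries.X ^ (2 * m + 1)) 1) ^ s' *
      (PowerSeries.invOfUnit (1 - PowerSeries.X ^ (2 * m + 2)) 1) ^ r' with hF
  have key : ((PowerSeries.coeff (R := ℤ) L F : ℤ) : ZMod p)
      = PowerSeries.coeff (R := ZMod p) L (PowerSeries.map (Int.castRingHom (ZMod p)) F) := by
    rw [PowerSeries.coeff_map]
    rfl
  rw [key]
  set A : PowerSeries (ZMod p) :=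
    ∏ m ∈ Finset.range (L + 1), (gg p ((2*m+1)*p) ^ (k+1) * gg p ((2*m+2)*p) ^ (kj+1)) with hA
  have hsplit : ∀ m : ℕ,
      (gg p (2*m+1))^s' * (gg p (2*m+2))^r'
        = (gg p ((2*m+1)*p) ^ (k+1) * gg p ((2*m+2)*p) ^ (kj+1))
          * (gg p (2*m+1) * (1 - X^(2*m+2))) := by
    intro m
    have hg1 : (gg p (2*m+1))^s' = gg p ((2*m+1)*p) ^ (k+1) * gg p (2*m+1) := by
      rw [show s' = p*(k+1)+1 from by rw [hs', mul_add, mul_one]; omega, pow_add, pow_mul, pow_one,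
        gg_pow p hodd _ (by omega)]
    have hg2 : (gg p (2*m+2))^r' = gg p ((2*m+2)*p) ^ (kj+1) * (1 - X^(2*m+2)) := by
      have hstep : (gg p (2*m+2))^r' = (gg p (2*m+2))^(r'+1) * (1 - X^(2*m+2)) := by
        calc (gg p (2*m+2))^r'
            = (gg p (2*m+2))^r' * (gg p (2*m+2) * (1 - X^(2*m+2))) := by
              rw [gg_mul p _ (by omega), mul_one]
          _ = (gg p (2*m+2))^(r'+1) * (1 - X^(2*m+2)) := by ring
      rw [hstep, show r'+1 = p*(kj+1) from by rw [hr', hkj, mul_add, mul_one]; omega, pow_mul, gg_pow p hodd _ (by omega)]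
    rw [hg1, hg2]
    ring
  have hmap : PowerSeries.map (Int.castRingHom (ZMod p)) F = A * BBz p (L+1) := by
    rw [hF, map_prod]
    calc ∏ m ∈ Finset.range (L + 1), PowerSeries.map (Int.castRingHom (ZMod p))
          ((PowerSeries.invOfUnit (1 - PowerSeries.X ^ (2 * m + 1)) 1) ^ s' *
            (PowerSeries.invOfUnit (1 - PowerSeries.X ^ (2 * m + 2)) 1) ^ r')
        = ∏ m ∈ Finset.range (L + 1), ((gg p (2*m+1))^s' * (gg p (2*m+2))^r') := by
          apply Finset.prod_congr rfl
          intro m _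
          rw [map_mul, map_pow, map_pow, map_inv p _ (by omega), map_inv p _ (by omega)]
      _ = ∏ m ∈ Finset.range (L + 1),
            ((gg p ((2*m+1)*p) ^ (k+1) * gg p ((2*m+2)*p) ^ (kj+1))
              * (gg p (2*m+1) * (1 - X^(2*m+2)))) :=
          Finset.prod_congr rfl (fun m _ => hsplit m)
      _ = A * BBz p (L+1) := by rw [hA, BBz, ← prod_mul_distrib]
  rw [hmap]
  have hPsuppA : Psupp p A := by
    rw [hA]
    apply Finset.prod_induction _ (Psupp p) (fun a b ha hb => Psupp_mul p ha hb) (Psupp_one p)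
    intro m _
    exact Psupp_mul p (Psupp_pow p (Psupp_gg p hodd (2*m+1) (by omega)) _)
      (Psupp_pow p (Psupp_gg p hodd (2*m+2) (by omega)) _)
  rw [PowerSeries.coeff_mul]
  apply Finset.sum_eq_zero
  intro x hx
  rw [Finset.HasAntidiagonal.mem_antidiagonal] at hx
  by_cases hdvd : p ∣ x.1
  · suffices h : coeff (R := ZMod p) x.2 (BBz p (L+1)) = 0 by rw [h, mul_zero]
    have hdiv : (p:ℤ) ∣ (x.2:ℤ) - r := by
      obtain ⟨c, hc⟩ := hdvd
      have hcast : (x.1:ℤ) + (x.2:ℤ) = (p:ℤ)*n + r := by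
        have : ((x.1 + x.2 : ℕ) : ℤ) = ((p*n+r : ℕ) : ℤ) := by rw [hx]
        push_cast at this
        linarith
      refine ⟨(n:ℤ) - c, ?_⟩
      have hc' : (x.1:ℤ) = (p:ℤ)*c := by exact_mod_cast hc
      linarith [hcast, hc']
    have htri : ∀ t, tri t ≠ x.2 := by
      intro t htt
      apply hqnr (2*(t:ℤ)+1)
      have h8 : (2*(t:ℤ)+1)^2 = 8 * (x.2:ℤ) + 1 := by
        have h2t := two_tri t
        have he : ((tri t : ℕ) : ℤ) = (x.2 : ℤ) := by exact_mod_cast congrArg (Nat.cast (R := ℤ)) htt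
        have h2t' : 2 * ((tri t : ℕ) : ℤ) = (t:ℤ) * ((t:ℤ)+1) := by exact_mod_cast h2t
        nlinarith [h2t', he]
      apply Int.ModEq.symm
      apply (Int.modEq_iff_dvd).mpr
      have hfin : (2*(t:ℤ)+1)^2 - ((8*r+1 : ℕ) : ℤ) = 8 * ((x.2:ℤ) - r) := by
        rw [h8]
        push_cast
        ring
      rw [hfin]
      exact hdiv.mul_left 8
    have hx2 : x.2 < L + 1 := by omega
    exact coeff_BBz_eq_zero p (L+1) x.2 hx2 htri
  · rw [hPsuppA x.1 hdvd, zero_mul]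
end

section
/- For all integers α ≥ 0 and n ≥ 0, both a_{2,4}(3^{2α+3} n + 3^{2(α+1)}) ≡ 0 (mod 3) and a_{2,4}(3^{2α+3} n + 2·3^{2(α+1)}) ≡ 0 (mod 3). -/
set_option maxHeartbeats 1000000
open PowerSeries Finset

abbrev R3 := ZMod 3
abbrev S3 := PowerSeries R3

namespace St
def EqUpTo (d : ℕ) (f g : S3) : Prop := ∀ i < d, PowerSeries.coeff (R := R3) i f = PowerSeries.coeff (R := R3) i g

lemma EqUpTo.refl (d : ℕ) (f : S3) : EqUpTo d f f := fun _ _ => rfl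

lemma EqUpTo.mul {d : ℕ} {f g f' g' : S3} (h : EqUpTo d f g) (h' : EqUpTo d f' g') :
    EqUpTo d (f * f') (g * g') := by
  intro i hi
  rw [coeff_mul, coeff_mul]
  refine Finset.sum_congr rfl fun p hp => ?_
  have hm := Finset.HasAntidiagonal.mem_antidiagonal.mp hp
  rw [h p.1 (by omega), h' p.2 (by omega)]

lemma EqUpTo.mono {d d' : ℕ} {f g : S3} (h : EqUpTo d f g) (hd : d' ≤ d) : EqUpTo d' f g :=
  fun i hi => h i (lt_of_lt_of_le hi hd)

noncomputable def qbin : ℕ → ℕ → S3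
  | _, 0 => 1
  | 0, _ + 1 => 0
  | m + 1, k + 1 => qbin m k + X ^ (2 * (k + 1)) * qbin m (k + 1)

@[simp] lemma qbin_zero (m : ℕ) : qbin m 0 = 1 := by cases m <;> rfl
lemma qbin_succ_succ (m k : ℕ) :
    qbin (m+1) (k+1) = qbin m k + X ^ (2 * (k + 1)) * qbin m (k + 1) := rfl

lemma qbin_eq_zero : ∀ {m k : ℕ}, m < k → qbin m k = 0
  | 0, _ + 1, _ => rfl
  | m + 1, k + 1, h => by
    rw [qbin_succ_succ, qbin_eq_zero (by omega), qbin_eq_zero (by omega), mul_zero, add_zero]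

lemma qbin_self : ∀ m : ℕ, qbin m m = 1
  | 0 => rfl
  | m + 1 => by rw [qbin_succ_succ, qbin_self m, qbin_eq_zero (by omega), mul_zero, add_zero]

lemma qbin_pascal2 (m : ℕ) : ∀ k : ℕ, k ≤ m → qbin (m+1) (k+1) = qbin m (k+1) + X ^ (2 * (m - k)) * qbin m k := by
  induction m with
  | zero =>
    intro k hk
    interval_cases k
    rw [qbin_succ_succ]
    simp [qbin_eq_zero]
  | succ m ih =>
    intro k hk
    rcases k with _ | k
    · have ihz := ih 0 (by omega)
      rw [qbin_succ_succ]
      conv_lhs => rw [ihz]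
      conv_rhs => rw [qbin_succ_succ m 0]
      simp only [qbin_zero, Nat.sub_zero, mul_one]
      have e1 : 2 * (m+1) = 2 * 1 + 2 * m := by omega
      rw [e1, pow_add]
      ring
    · rcases Nat.lt_or_ge k m with hkm | hkm
      · -- k + 1 <= m
        obtain ⟨u, rfl⟩ : ∃ u, m = k + u + 1 := ⟨m - (k+1), by omega⟩
        have ihk := ih k (by omega)
        have ihk1 := ih (k+1) (by omega)
        have hs1 : k + u + 1 - k = u + 1 := by omega
        have hs2 : k + u + 1 + 1 - (k + 1) = u + 1 := by omega
        have hs4 : k + u + 1 - (k + 1) = u := by omega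
        rw [hs1] at ihk
        rw [hs2]
        rw [hs4] at ihk1
        conv_lhs => rw [qbin_succ_succ (k+u+1+1) (k+1), ihk, ihk1]
        conv_rhs => rw [qbin_succ_succ (k+u+1) (k+1), qbin_succ_succ (k+u+1) k]
        have e3 : (2 * (k+1+1)) + 2 * u = 2 * (u+1) + 2 * (k+1) := by omega
        calc qbin (k+u+1) (k+1) + X ^ (2 * (u+1)) * qbin (k+u+1) k +
              X ^ (2*(k+1+1)) * (qbin (k+u+1) (k+1+1) + X ^ (2*u) * qbin (k+u+1) (k+1))
            = qbin (k+u+1) (k+1) + X ^ (2*(k+1+1)) * qbin (k+u+1) (k+1+1) +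
              (X ^ (2*(u+1)) * qbin (k+u+1) k +
              X ^ ((2*(k+1+1)) + 2*u) * qbin (k+u+1) (k+1)) := by rw [pow_add]; ring
          _ = _ := by rw [e3, pow_add]; ring
      · -- k = m
        have : k = m := by omega
        subst this
        rw [qbin_self, qbin_eq_zero (by omega)]
        simp [qbin_self]
/-- `Bc r = (q^2;q^2)_r` -/
noncomputable def Bc (r : ℕ) : S3 := ∏ j ∈ Finset.range r, (1 - X ^ (2*j+2))

lemma Bc_succ (r : ℕ) : Bc (r+1) = Bc r * (1 - X ^ (2*r+2)) := Finset.prod_range_succ _ _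

lemma qbin_mul_Bc : ∀ m : ℕ, ∀ k ≤ m, qbin m k * Bc k * Bc (m-k) = Bc m := by
  intro m
  induction m with
  | zero => intro k hk; interval_cases k; simp [Bc]
  | succ m ih =>
    intro k hk
    rcases k with _ | k
    · simp [Bc]
    · rcases Nat.lt_or_ge k m with hkm | hkm
      · obtain ⟨u, rfl⟩ : ∃ u, m = k + u + 1 := ⟨m - (k+1), by omega⟩
        have ihk := ih k (by omega)
        have ihk1 := ih (k+1) (by omega)
        have hs1 : k + u + 1 - k = u + 1 := by omega
        have hs2 : k + u + 1 - (k+1) = u := by omega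
        have hs3 : k + u + 1 + 1 - (k+1) = u + 1 := by omega
        rw [hs1] at ihk
        rw [hs2] at ihk1
        rw [hs3, qbin_succ_succ, Bc_succ k, Bc_succ u, Bc_succ (k+u+1)]
        calc (qbin (k+u+1) k + X ^ (2 * (k + 1)) * qbin (k+u+1) (k+1)) * (Bc k * (1 - X ^ (2*k+2))) *
              (Bc u * (1 - X ^ (2*u+2)))
            = (qbin (k+u+1) k * Bc k * (Bc u * (1 - X ^ (2*u+2)))) * (1 - X ^ (2*k+2))
              + X ^ (2*(k+1)) * (qbin (k+u+1) (k+1) * (Bc k * (1 - X ^ (2*k+2))) * Bc u) *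
                (1 - X ^ (2*u+2)) := by ring
          _ = Bc (k+u+1) * (1 - X ^ (2*k+2)) + X ^ (2*(k+1)) * Bc (k+u+1) * (1 - X ^ (2*u+2)) := by
              rw [← Bc_succ u, ← Bc_succ k, ihk, ihk1]
          _ = Bc (k+u+1) * (1 - X ^ (2*(k+u+1)+2)) := by
              have e1 : 2*(k+u+1)+2 = 2*(k+1) + (2*u+2) := by omega
              rw [e1, pow_add]
              ring
      · have hk' : k = m := by omega
        subst hk'
        rw [qbin_self, Nat.sub_self, one_mul]
        have hBc0 : Bc 0 = 1 := rfl
        rw [hBc0, mul_one]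

lemma qbinThm (y z : S3) : ∀ m : ℕ, ∏ j ∈ Finset.range m, (y + z * X^(2*j))
    = ∑ k ∈ Finset.range (m+1), X^(k*(k-1)) * qbin m k * z^k * y^(m-k) := by
  intro m
  induction m with
  | zero => simp
  | succ m ih =>
    rw [Finset.prod_range_succ, ih,
      Finset.sum_range_succ' (fun k => X^(k*(k-1)) * qbin (m+1) k * z^k * y^(m+1-k)) (m+1)]
    have hA : ∀ k ∈ Finset.range (m+1),
        X^((k+1)*((k+1)-1)) * qbin (m+1) (k+1) * z^(k+1) * y^(m+1-(k+1))
        = X^((k+1)*k) * qbin m (k+1) * z^(k+1) * y^(m-k)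
          + X^(k*(k-1)+2*m) * qbin m k * z^(k+1) * y^(m-k) := by
      intro k hk
      have hkm : k ≤ m := by simp at hk; omega
      have e0 : (k+1) - 1 = k := by omega
      have e1 : m + 1 - (k+1) = m - k := by omega
      have e2 : (k+1)*k + 2*(m-k) = k*(k-1) + 2*m := by
        rcases k with _ | j
        · simp
        · have h3 : (j+1+1)*(j+1) = (j+1)*j + 2*(j+1) := by ring
          have h4 : (j+1)*((j+1)-1) = (j+1)*j := by norm_num
          rw [h3, h4]
          omega
      rw [e0, e1, qbin_pascal2 m k hkm]
      rw [mul_add, add_mul, add_mul, ← e2, pow_add]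
      ring
    rw [Finset.sum_congr rfl hA, Finset.sum_add_distrib]
    have hB : ∑ k ∈ Finset.range (m+1), X^(k*(k-1)+2*m) * qbin m k * z^(k+1) * y^(m-k)
        = (∑ k ∈ Finset.range (m+1), X^(k*(k-1)) * qbin m k * z^k * y^(m-k)) * (z * X^(2*m)) := by
      rw [Finset.sum_mul]
      refine Finset.sum_congr rfl fun k _ => ?_
      rw [pow_add]
      ring
    have hC : (∑ k ∈ Finset.range (m+1), X^(k*(k-1)) * qbin m k * z^k * y^(m-k)) * y
        = (∑ k ∈ Finset.range (m+1), X^((k+1)*k) * qbin m (k+1) * z^(k+1) * y^(m-k)) + y^(m+1) := by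
      rw [Finset.sum_mul,
        Finset.sum_range_succ' (fun k => X^(k*(k-1)) * qbin m k * z^k * y^(m-k) * y) m,
        Finset.sum_range_succ (fun k => X^((k+1)*k) * qbin m (k+1) * z^(k+1) * y^(m-k)) m]
      have hterm : ∀ k ∈ Finset.range m,
          X^((k+1)*((k+1)-1)) * qbin m (k+1) * z^(k+1) * y^(m-(k+1)) * y
          = X^((k+1)*k) * qbin m (k+1) * z^(k+1) * y^(m-k) := by
        intro k hk
        have hkm : k < m := by simpa using hk
        have e0 : (k+1) - 1 = k := by omega
        have e1 : m - k = m - (k+1) + 1 := by omega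
        rw [e0, e1, pow_succ]
        ring
      rw [Finset.sum_congr rfl hterm]
      rw [qbin_eq_zero (Nat.lt_succ_self m)]
      simp [pow_succ]
    rw [mul_add, hB, hC]
    simp only [qbin_zero, pow_zero, Nat.sub_zero, Nat.zero_mul, one_mul, mul_one]
    ring


noncomputable def Ac (n : ℕ) : S3 := ∏ j ∈ Finset.range n, (1 - X ^ (2*j+1))

lemma gauss_finite (n : ℕ) :
    (-1)^(n+1) * X ^ ((n+1)*(3*n+1)) * Ac (n+1)^2
      = ∑ k ∈ Finset.range (2*n+3), (-1)^k * X^(k*(k-1) + (2*n+1)*(2*n+2-k)) * qbin (2*n+2) k := by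
  have hq := qbinThm (X ^ (2*n+1)) (-1) (2*n+2)
  have hL : ∏ j ∈ Finset.range (2*n+2), ((X:S3) ^ (2*n+1) + (-1) * X ^ (2*j))
      = (-1)^(n+1) * X ^ ((n+1)*(3*n+1)) * Ac (n+1)^2 := by
    have hsplit : (2*n+2) = (n+1) + (n+1) := by omega
    rw [hsplit, Finset.prod_range_add]
    have h1 : ∏ j ∈ Finset.range (n+1), ((X:S3) ^ (2*n+1) + (-1) * X ^ (2*j))
        = (-1)^(n+1) * X ^ ((n+1)*n) * Ac (n+1) := by
      have hterm : ∀ j ∈ Finset.range (n+1), ((X:S3) ^ (2*n+1) + (-1) * X ^ (2*j))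
          = (-1) * (X^(2*j) * (1 - X ^ (2*(n-j)+1))) := by
        intro j hj
        have hjn : j ≤ n := by simpa [Nat.lt_succ_iff] using hj
        have e : 2*n+1 = 2*j + (2*(n-j)+1) := by omega
        rw [e, pow_add]
        ring
      rw [Finset.prod_congr rfl hterm, Finset.prod_mul_distrib, Finset.prod_mul_distrib,
        Finset.prod_const, Finset.prod_pow_eq_pow_sum, Finset.card_range]
      have hsum : ∑ j ∈ Finset.range (n+1), 2*j = (n+1)*n := by
        calc ∑ j ∈ Finset.range (n+1), 2*j = (∑ j ∈ Finset.range (n+1), j) * 2 := by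
              rw [Finset.sum_mul]; exact Finset.sum_congr rfl fun j _ => by ring
          _ = (n+1)*n := by simpa using Finset.sum_range_id_mul_two (n+1)
      rw [hsum]
      have hrefl : ∏ j ∈ Finset.range (n+1), ((1:S3) - X ^ (2*(n-j)+1)) = Ac (n+1) := by
        have := Finset.prod_range_reflect (fun j => (1:S3) - X ^ (2*j+1)) (n+1)
        simp only [Nat.add_sub_cancel] at this
        exact this
      rw [hrefl]
      ring
    have h2 : ∏ j ∈ Finset.range (n+1), ((X:S3) ^ (2*n+1) + (-1) * X ^ (2*((n+1)+j)))
        = X ^ ((n+1)*(2*n+1)) * Ac (n+1) := by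
      have hterm : ∀ j ∈ Finset.range (n+1), ((X:S3) ^ (2*n+1) + (-1) * X ^ (2*((n+1)+j)))
          = X^(2*n+1) * (1 - X ^ (2*j+1)) := by
        intro j hj
        have e : 2*((n+1)+j) = (2*n+1) + (2*j+1) := by omega
        rw [e, pow_add]
        ring
      rw [Finset.prod_congr rfl hterm, Finset.prod_mul_distrib, Finset.prod_const,
        Finset.card_range, ← pow_mul]
      have e2 : (2*n+1)*(n+1) = (n+1)*(2*n+1) := by ring
      rw [e2]
      rfl
    rw [h1, h2]
    have e3 : (n+1)*n + (n+1)*(2*n+1) = (n+1)*(3*n+1) := by ring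
    rw [← e3, pow_add]
    ring
  rw [hL] at hq
  rw [hq]
  refine Finset.sum_congr rfl fun k hk => ?_
  rw [← pow_mul, pow_add]
  ring

lemma EqUpTo.symm {d : ℕ} {f g : S3} (h : EqUpTo d f g) : EqUpTo d g f :=
  fun i hi => (h i hi).symm

lemma one_sub_X_pow_EqUpTo {d k : ℕ} (h : d ≤ k) : EqUpTo d (1 - X ^ k) 1 := by
  intro i hi
  rw [map_sub, coeff_X_pow, if_neg (by omega)]
  ring

lemma EqUpTo_prod_one (d : ℕ) (s : Finset ℕ) (e : ℕ → ℕ) (h : ∀ j ∈ s, d ≤ e j) :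
    EqUpTo d (∏ j ∈ s, (1 - X ^ (e j))) 1 := by
  induction s using Finset.cons_induction with
  | empty => simp [EqUpTo.refl]
  | cons a s ha ih =>
    rw [Finset.prod_cons]
    have h1 : EqUpTo d (1 - X ^ (e a)) 1 := one_sub_X_pow_EqUpTo (h a (Finset.mem_cons_self a s))
    have h2 := ih fun j hj => h j (Finset.mem_cons_of_mem hj)
    have := h1.mul h2
    simpa using this

lemma EqUpTo.cancel {d : ℕ} {f g u : S3} (hu : PowerSeries.constantCoeff (R := R3) u = 1)
    (h : EqUpTo d (f * u) (g * u)) : EqUpTo d f g := by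
  have hmul : u * PowerSeries.invOfUnit u 1 = 1 := PowerSeries.mul_invOfUnit u 1 (by simp [hu])
  have h2 := h.mul (EqUpTo.refl d (PowerSeries.invOfUnit u 1))
  intro i hi
  have h3 := h2 i hi
  rwa [mul_assoc, mul_assoc, hmul, mul_one, mul_one] at h3

lemma constantCoeff_Bc (r : ℕ) : PowerSeries.constantCoeff (R := R3) (Bc r) = 1 := by
  rw [Bc, map_prod]
  rw [Finset.prod_eq_one]
  intro j hj
  rw [map_sub, map_pow, constantCoeff_X, map_one]
  rw [zero_pow (by omega)]
  ring

lemma Bc_EqUpTo {b c : ℕ} (hbc : b ≤ c) : EqUpTo (2*b+2) (Bc c) (Bc b) := by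
  obtain ⟨u, rfl⟩ : ∃ u, c = b + u := ⟨c - b, by omega⟩
  rw [Bc, Finset.prod_range_add]
  rw [← Bc]
  have h2 : EqUpTo (2*b+2) (∏ j ∈ Finset.range u, (1 - X ^ (2*(b+j)+2))) 1 :=
    EqUpTo_prod_one _ _ _ (fun j _ => by omega)
  have := (EqUpTo.refl (2*b+2) (Bc b)).mul h2
  intro i hi
  have h3 := this i hi
  rwa [mul_one] at h3

lemma qbin_Bc_approx (N k : ℕ) (hk : k ≤ 2*N) :
    EqUpTo (2*min k (2*N-k)+2) (qbin (2*N) k * Bc N) 1 := by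
  have hmul := qbin_mul_Bc (2*N) k hk
  set d := 2*min k (2*N-k)+2 with hd
  have hcc : PowerSeries.constantCoeff (R := R3) (Bc k * Bc (2*N-k)) = 1 := by
    rw [map_mul, constantCoeff_Bc, constantCoeff_Bc, mul_one]
  refine EqUpTo.cancel hcc ?_
  have hrearr : qbin (2*N) k * Bc N * (Bc k * Bc (2*N-k)) = (Bc (2*N)) * Bc N := by
    rw [← hmul]; ring
  rw [hrearr, one_mul]
  rcases Nat.le_total k N with hkN | hkN
  · have h1 : EqUpTo d (Bc (2*N)) (Bc k) := (Bc_EqUpTo (by omega)).mono (by omega)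
    have h2 : EqUpTo d (Bc N) (Bc (2*N-k)) :=
      ((Bc_EqUpTo (show N ≤ 2*N-k by omega)).symm).mono (by omega)
    exact h1.mul h2
  · have h1 : EqUpTo d (Bc (2*N)) (Bc k) := (Bc_EqUpTo (by omega)).mono (by omega)
    have h2 : EqUpTo d (Bc N) (Bc (2*N-k)) :=
      (Bc_EqUpTo (show 2*N-k ≤ N by omega)).mono (by omega)
    exact h1.mul h2

def dd (N k : ℕ) : ℕ := (k - N) + (N - k)

/-- coefficients of the theta series `∑ (-1)^k q^(k^2)` over `ZMod 3` -/
def thc (i : ℕ) : R3 :=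
  if (Nat.sqrt i)^2 = i then (if i = 0 then 1 else 2 * (-1)^(Nat.sqrt i)) else 0

lemma theta_coeff (n : ℕ) : ∀ i ≤ n+1,
    PowerSeries.coeff (R := R3) i (Ac (n+1)^2 * Bc (n+1)) = thc i := by
  intro i hi
  have hsign : ((-1 : S3))^(n+1) * ((-1 : S3))^(n+1) = 1 := by
    rw [← mul_pow]; norm_num
  have hg2 : X ^ ((n+1)*(3*n+1)) * (Ac (n+1)^2 * Bc (n+1))
      = (-1)^(n+1) * ∑ k ∈ Finset.range (2*n+3),
          ((-1)^k * (X^(k*(k-1) + (2*n+1)*(2*n+2-k)) * (qbin (2*n+2) k * Bc (n+1)))) := by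
    calc X ^ ((n+1)*(3*n+1)) * (Ac (n+1)^2 * Bc (n+1))
        = (-1)^(n+1) * (((-1)^(n+1) * X^((n+1)*(3*n+1)) * Ac (n+1)^2) * Bc (n+1)) := by
          rw [show ((-1:S3))^(n+1) * (((-1)^(n+1) * X^((n+1)*(3*n+1)) * Ac (n+1)^2) * Bc (n+1))
              = ((-1)^(n+1) * (-1)^(n+1)) * (X^((n+1)*(3*n+1)) * (Ac (n+1)^2 * Bc (n+1))) from by
              ring, hsign, one_mul]
      _ = (-1)^(n+1) * ((∑ k ∈ Finset.range (2*n+3),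
            (-1)^k * X^(k*(k-1) + (2*n+1)*(2*n+2-k)) * qbin (2*n+2) k) * Bc (n+1)) := by
          rw [gauss_finite n]
      _ = (-1)^(n+1) * ∑ k ∈ Finset.range (2*n+3),
            ((-1)^k * (X^(k*(k-1) + (2*n+1)*(2*n+2-k)) * (qbin (2*n+2) k * Bc (n+1)))) := by
          rw [Finset.sum_mul]
          congr 1
          exact Finset.sum_congr rfl fun k _ => by ring
  have hcoeff := congrArg (PowerSeries.coeff (R := R3) (i + (n+1)*(3*n+1))) hg2
  rw [PowerSeries.coeff_X_pow_mul] at hcoeff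
  have hCpow : ((-1 : S3))^(n+1) = PowerSeries.C (R := R3) ((-1 : R3)^(n+1)) := by
    rw [map_pow, map_neg, map_one]
  rw [hCpow, PowerSeries.coeff_C_mul, map_sum] at hcoeff
  have hterm : ∀ k ∈ Finset.range (2*n+3),
      PowerSeries.coeff (R := R3) (i + (n+1)*(3*n+1))
        ((-1)^k * (X^(k*(k-1) + (2*n+1)*(2*n+2-k)) * (qbin (2*n+2) k * Bc (n+1))))
      = if (dd (n+1) k)*(dd (n+1) k) = i then ((-1):R3)^k else 0 := by
    intro k hk
    have hk2 : k ≤ 2*(n+1) := by simp at hk; omega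
    have hCk : ((-1 : S3))^k = PowerSeries.C (R := R3) ((-1 : R3)^k) := by
      rw [map_pow, map_neg, map_one]
    rw [hCk, PowerSeries.coeff_C_mul, PowerSeries.coeff_X_pow_mul']
    have hjd : dd (n+1) k = (k - (n+1)) + ((n+1) - k) := rfl
    have hjN : dd (n+1) k ≤ n+1 := by omega
    have hujj : dd (n+1) k = 0 ∨ dd (n+1) k ≤ (dd (n+1) k)*(dd (n+1) k) := by
      rcases Nat.eq_zero_or_pos (dd (n+1) k) with h|h
      · exact Or.inl h
      · exact Or.inr (Nat.le_mul_of_pos_left _ h)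
    have hekE : k*(k-1) + (2*n+1)*(2*n+2-k)
        = (n+1)*(3*n+1) + (dd (n+1) k)*(dd (n+1) k) := by
      rcases Nat.eq_zero_or_pos k with rfl | hk1
      · have hz : dd (n+1) 0 = n+1 := by omega
        rw [hz]
        simp
        ring
      · rcases Nat.le_total k (n+1) with hkN | hkN
        · have hjv : dd (n+1) k = (n+1) - k := by omega
          rw [hjv]
          zify [hk1, hkN, show k ≤ 2*n+2 by omega]
          ring
        · have hjv : dd (n+1) k = k - (n+1) := by omega
          rw [hjv]
          zify [hk1, hkN, show k ≤ 2*n+2 by omega, show 1 ≤ k by omega]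
          ring
    rw [hekE]
    have hmin : 2 * min k (2*(n+1)-k) + 2 = 2*((n+1) - dd (n+1) k) + 2 := by omega
    have happrox := qbin_Bc_approx (n+1) k hk2
    rw [hmin] at happrox
    have h22 : 2*(n+1) = 2*n+2 := by ring
    rw [h22] at happrox
    generalize hA : (dd (n+1) k)*(dd (n+1) k) = a at *
    generalize hEv : (n+1)*(3*n+1) = E at *
    rcases le_or_gt a i with hai | hai
    · rw [if_pos (by omega)]
      have hidx : i + E - (E + a) = i - a := by omega
      rw [hidx]
      have hlt : i - a < 2*((n+1) - dd (n+1) k) + 2 := by omega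
      rw [happrox (i-a) hlt, PowerSeries.coeff_one]
      rcases eq_or_lt_of_le hai with rfl | hlt2
      · rw [if_pos (by omega), if_pos rfl, mul_one]
      · rw [if_neg (by omega), if_neg (by omega), mul_zero]
    · rw [if_neg (by omega), mul_zero, if_neg (by omega)]
  rw [Finset.sum_congr rfl hterm] at hcoeff
  have hsum : ∑ k ∈ Finset.range (2*n+3),
      (if (dd (n+1) k)*(dd (n+1) k) = i then ((-1):R3)^k else 0)
      = (-1)^(n+1) * thc i := by
    by_cases hsq : (Nat.sqrt i)^2 = i
    · rcases Nat.eq_zero_or_pos i with rfl | hipos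
      · rw [Finset.sum_eq_single (n+1)]
        · have hz : dd (n+1) (n+1) = 0 := by simp [dd]
          rw [hz, if_pos (by norm_num)]
          rw [thc]
          norm_num
        · intro k hk hne
          rw [if_neg]
          have hdz : dd (n+1) k ≠ 0 := by simp [dd]; omega
          exact fun hcon => hdz (by
            rcases Nat.eq_zero_or_pos (dd (n+1) k) with h|h
            · exact h
            · exact absurd hcon (by positivity))
        · intro h
          exact absurd (by simp; omega : (n+1) ∈ Finset.range (2*n+3)) h
      · -- i = s*s with s ≥ 1
        have hss : (Nat.sqrt i) * (Nat.sqrt i) = i := by rw [← pow_two]; exact hsq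
        set s := Nat.sqrt i with hs
        have hs1 : 1 ≤ s := by
          rcases Nat.eq_zero_or_pos s with h|h
          · rw [h] at hss; omega
          · exact h
        have hsN : s ≤ n+1 := by
          have := Nat.sqrt_le_self i
          omega
        have hsub : ({(n+1)-s, (n+1)+s} : Finset ℕ) ⊆ Finset.range (2*n+3) := by
          intro x hx
          rcases Finset.mem_insert.mp hx with rfl | hx2
          · simp; omega
          · rw [Finset.mem_singleton.mp hx2]; simp; omega
        have hvan : ∀ x ∈ Finset.range (2*n+3), x ∉ ({(n+1)-s, (n+1)+s} : Finset ℕ) →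
            (if (dd (n+1) x)*(dd (n+1) x) = i then ((-1):R3)^x else 0) = 0 := by
          intro x hx hnot
          rw [if_neg]
          intro hcon
          have hdm : dd (n+1) x = s := by
            have h2 : (dd (n+1) x)*(dd (n+1) x) = s*s := by rw [hcon, hss]
            nlinarith [Nat.le_total (dd (n+1) x) s]
          apply hnot
          simp only [Finset.mem_insert, Finset.mem_singleton]
          simp only [dd] at hdm
          omega
        rw [← Finset.sum_subset hsub hvan]
        rw [Finset.sum_pair (show (n+1)-s ≠ (n+1)+s by omega)]
        have hd1 : dd (n+1) ((n+1)-s) = s := by simp only [dd]; omega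
        have hd2 : dd (n+1) ((n+1)+s) = s := by simp only [dd]; omega
        rw [hd1, hd2, if_pos hss, if_pos hss]
        rw [thc, if_pos hsq, if_neg (by omega)]
        have hpows : ((-1:R3))^s * (-1)^s = 1 := by rw [← mul_pow]; norm_num
        have h1 : ((-1:R3))^((n+1)+s) = (-1)^(n+1) * (-1)^s := pow_add _ _ _
        have h2 : ((-1:R3))^((n+1)-s) = (-1)^(n+1) * (-1)^s := by
          have hNs : (n+1) - s + s = n+1 := by omega
          calc ((-1:R3))^((n+1)-s) = (-1)^((n+1)-s) * ((-1)^s * (-1)^s) := by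
                rw [hpows, mul_one]
            _ = ((-1)^((n+1)-s+s)) * (-1)^s := by rw [pow_add]; ring
            _ = (-1)^(n+1) * (-1)^s := by rw [hNs]
        rw [h1, h2, ← hs]
        ring
    · rw [thc, if_neg hsq]
      rw [Finset.sum_eq_zero, mul_zero]
      intro k hk
      rw [if_neg]
      intro hcon
      have hsq2 : Nat.sqrt i = dd (n+1) k := by
        rw [← hcon, Nat.sqrt_eq]
      rw [hsq2] at hsq
      exact hsq (by rw [pow_two]; exact hcon)
  rw [hsum] at hcoeff
  rw [hcoeff, ← mul_assoc]
  have hfin : ((-1:R3))^(n+1) * (-1)^(n+1) = 1 := by rw [← mul_pow]; norm_num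
  rw [hfin, one_mul]

lemma EqUpTo.pow {d : ℕ} {f g : S3} (h : EqUpTo d f g) : ∀ e : ℕ, EqUpTo d (f^e) (g^e)
  | 0 => by simpa using EqUpTo.refl d 1
  | e+1 => by
    rw [pow_succ, pow_succ]
    exact (EqUpTo.pow h e).mul h

lemma EqUpTo_prod_one' {d : ℕ} (s : Finset ℕ) (f : ℕ → S3)
    (h : ∀ j ∈ s, EqUpTo d (f j) 1) : EqUpTo d (∏ j ∈ s, f j) 1 := by
  induction s using Finset.cons_induction with
  | empty => simp [EqUpTo.refl]
  | cons a s ha ih =>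
    rw [Finset.prod_cons]
    have h2 := (h a (Finset.mem_cons_self a s)).mul (ih fun j hj => h j (Finset.mem_cons_of_mem hj))
    simpa using h2

noncomputable def Th : S3 := PowerSeries.mk thc

lemma Th_EqUpTo (n : ℕ) : EqUpTo (n+2) Th (Ac (n+1)^2 * Bc (n+1)) := by
  intro i hi
  rw [Th, PowerSeries.coeff_mk]
  exact (theta_coeff n i (by omega)).symm

noncomputable def Fs : S3 := PowerSeries.mk fun N => ((colorPart 2 4 N : ℤ) : R3)

lemma constCoeff_one_sub_X_pow_Z (k : ℕ) (hk : 1 ≤ k) :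
    PowerSeries.constantCoeff (R := ℤ) (1 - X^k) = ((1 : ℤˣ) : ℤ) := by
  rw [map_sub, map_pow, PowerSeries.constantCoeff_X, map_one, zero_pow (by omega), sub_zero,
    Units.val_one]

lemma constCoeff_one_sub_X_pow (k : ℕ) (hk : 1 ≤ k) :
    PowerSeries.constantCoeff (R := R3) (1 - X^k) = ((1 : R3ˣ) : R3) := by
  rw [map_sub, map_pow, PowerSeries.constantCoeff_X, map_one, zero_pow (by omega), sub_zero,
    Units.val_one]

lemma map_invOfUnit (k : ℕ) (hk : 1 ≤ k) :
    PowerSeries.map (Int.castRingHom R3) (PowerSeries.invOfUnit (1 - X^k) 1)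
      = PowerSeries.invOfUnit (1 - X^k) 1 := by
  have hZ : ((1 : PowerSeries ℤ) - X^k) * PowerSeries.invOfUnit (1 - X^k) 1 = 1 :=
    PowerSeries.mul_invOfUnit _ _ (constCoeff_one_sub_X_pow_Z k hk)
  have h1 : ((1:S3) - X^k) * PowerSeries.map (Int.castRingHom R3)
      (PowerSeries.invOfUnit (1 - X^k) 1) = 1 := by
    have := congrArg (PowerSeries.map (Int.castRingHom R3)) hZ
    rwa [map_mul, map_sub, map_one, map_pow, PowerSeries.map_X] at this
  have h2 : ((1:S3) - X^k) * PowerSeries.invOfUnit (1 - X^k) 1 = 1 :=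
    PowerSeries.mul_invOfUnit _ _ (constCoeff_one_sub_X_pow k hk)
  calc PowerSeries.map (Int.castRingHom R3) (PowerSeries.invOfUnit (1 - X^k) 1)
      = PowerSeries.map (Int.castRingHom R3) (PowerSeries.invOfUnit (1 - X^k) 1)
        * (((1:S3) - X^k) * PowerSeries.invOfUnit (1 - X^k) 1) := by rw [h2, mul_one]
    _ = (((1:S3) - X^k) * PowerSeries.map (Int.castRingHom R3)
        (PowerSeries.invOfUnit (1 - X^k) 1)) * PowerSeries.invOfUnit (1 - X^k) 1 := by ring
    _ = PowerSeries.invOfUnit (1 - X^k) 1 := by rw [h1, one_mul]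

noncomputable def Inv (M : ℕ) : S3 :=
  ∏ m ∈ Finset.range M,
    (PowerSeries.invOfUnit (1 - X ^ (2*m+1)) 1) ^ 4 * (PowerSeries.invOfUnit (1 - X ^ (2*m+2)) 1) ^ 2

lemma coeff_Fs (N : ℕ) : PowerSeries.coeff (R := R3) N Fs = PowerSeries.coeff (R := R3) N (Inv (N+1)) := by
  rw [Fs, PowerSeries.coeff_mk, colorPart]
  have hmap : PowerSeries.map (Int.castRingHom R3)
      (∏ m ∈ Finset.range (N + 1),
        (PowerSeries.invOfUnit (1 - PowerSeries.X ^ (2 * m + 1)) 1) ^ 4 *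
        (PowerSeries.invOfUnit (1 - PowerSeries.X ^ (2 * m + 2)) 1) ^ 2) = Inv (N+1) := by
    rw [map_prod]
    exact Finset.prod_congr rfl fun m _ => by
      rw [map_mul, map_pow, map_pow, map_invOfUnit _ (by omega), map_invOfUnit _ (by omega)]
  rw [← hmap, PowerSeries.coeff_map]
  rfl

lemma inv_EqUpTo (k : ℕ) (hk : 1 ≤ k) :
    EqUpTo k (PowerSeries.invOfUnit ((1:S3) - X^k) 1) 1 := by
  have h1 : ((1:S3) - X^k) * PowerSeries.invOfUnit (1 - X^k) 1 = 1 :=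
    PowerSeries.mul_invOfUnit _ _ (constCoeff_one_sub_X_pow k hk)
  have h2 : PowerSeries.invOfUnit ((1:S3) - X^k) 1
      = 1 + X^k * PowerSeries.invOfUnit ((1:S3) - X^k) 1 := by
    linear_combination h1
  intro i hi
  rw [h2, map_add, PowerSeries.coeff_X_pow_mul', if_neg (by omega), add_zero]

lemma Inv_EqUpTo {M M' : ℕ} (h : M' ≤ M) : EqUpTo (2*M'+1) (Inv M) (Inv M') := by
  obtain ⟨u, rfl⟩ : ∃ u, M = M' + u := ⟨M - M', by omega⟩
  rw [Inv, Finset.prod_range_add, ← Inv]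
  have htail : EqUpTo (2*M'+1) (∏ j ∈ Finset.range u,
      ((PowerSeries.invOfUnit (1 - X ^ (2*(M'+j)+1)) 1) ^ 4 *
       (PowerSeries.invOfUnit (1 - X ^ (2*(M'+j)+2)) 1) ^ 2)) 1 := by
    refine EqUpTo_prod_one' _ _ fun j _ => ?_
    have e1 : EqUpTo (2*M'+1) (PowerSeries.invOfUnit ((1:S3) - X ^ (2*(M'+j)+1)) 1) 1 :=
      (inv_EqUpTo _ (by omega)).mono (by omega)
    have e2 : EqUpTo (2*M'+1) (PowerSeries.invOfUnit ((1:S3) - X ^ (2*(M'+j)+2)) 1) 1 :=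
      (inv_EqUpTo _ (by omega)).mono (by omega)
    have := (e1.pow 4).mul (e2.pow 2)
    simpa using this
  have := (EqUpTo.refl (2*M'+1) (Inv M')).mul htail
  intro i hi
  have h3 := this i hi
  rwa [mul_one] at h3

lemma Fs_mul_Th_sq : Fs * Th^2 = 1 := by
  ext N
  have h1 : EqUpTo (N+1) Fs (Inv (N+1)) := by
    intro j hj
    rw [coeff_Fs j]
    exact ((Inv_EqUpTo (show j+1 ≤ N+1 by omega)).symm j (by omega))
  have h2 : EqUpTo (N+1) (Th^2) ((Ac (N+1)^2 * Bc (N+1))^2) :=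
    ((Th_EqUpTo N).mono (by omega)).pow 2
  have h3 := h1.mul h2
  have h4 : Inv (N+1) * (Ac (N+1)^2 * Bc (N+1))^2 = 1 := by
    rw [Inv, Ac, Bc]
    rw [show ((∏ j ∈ Finset.range (N+1), ((1:S3) - X ^ (2*j+1)))^2 *
          (∏ j ∈ Finset.range (N+1), ((1:S3) - X ^ (2*j+2))))^2
        = (∏ j ∈ Finset.range (N+1), ((1:S3) - X ^ (2*j+1)))^4 *
          (∏ j ∈ Finset.range (N+1), ((1:S3) - X ^ (2*j+2)))^2 from by ring]
    rw [← Finset.prod_pow, ← Finset.prod_pow, ← Finset.prod_mul_distrib,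
      ← Finset.prod_mul_distrib]
    refine Finset.prod_eq_one fun m _ => ?_
    have i1 : ((1:S3) - X^(2*m+1)) * PowerSeries.invOfUnit (1 - X^(2*m+1)) 1 = 1 :=
      PowerSeries.mul_invOfUnit _ _ (constCoeff_one_sub_X_pow _ (by omega))
    have i2 : ((1:S3) - X^(2*m+2)) * PowerSeries.invOfUnit (1 - X^(2*m+2)) 1 = 1 :=
      PowerSeries.mul_invOfUnit _ _ (constCoeff_one_sub_X_pow _ (by omega))
    calc PowerSeries.invOfUnit ((1:S3) - X^(2*m+1)) 1 ^ 4 *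
          PowerSeries.invOfUnit ((1:S3) - X^(2*m+2)) 1 ^ 2 *
          (((1:S3) - X ^ (2*m+1))^4 * ((1:S3) - X ^ (2*m+2))^2)
        = (((1:S3) - X^(2*m+1)) * PowerSeries.invOfUnit (1 - X^(2*m+1)) 1)^4 *
          (((1:S3) - X^(2*m+2)) * PowerSeries.invOfUnit (1 - X^(2*m+2)) 1)^2 := by
          rw [mul_pow, mul_pow]; ring
      _ = 1 := by rw [i1, i2]; norm_num
  have h5 := h3 N (by omega)
  rw [h4] at h5
  exact h5

lemma coeff_cube (f : S3) (N : ℕ) :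
    PowerSeries.coeff (R := R3) N (f^3) = if 3 ∣ N then PowerSeries.coeff (R := R3) (N/3) f else 0 := by
  haveI : Fact (Nat.Prime 3) := ⟨by norm_num⟩
  set P := PowerSeries.trunc (N+1) f with hP
  have htr : EqUpTo (N+1) f ((P : Polynomial R3) : S3) := by
    intro i hi
    rw [Polynomial.coeff_coe, hP, PowerSeries.coeff_trunc, if_pos (by omega)]
  have h3 := (htr.pow 3) N (by omega)
  rw [h3, ← Polynomial.coe_pow]
  have hP3 : P^3 = Polynomial.expand R3 3 P := by
    have hfr := Polynomial.map_frobenius_expand 3 P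
    rw [ZMod.frobenius_zmod, Polynomial.map_id] at hfr
    exact hfr.symm
  rw [hP3, Polynomial.coeff_coe, Polynomial.coeff_expand (by norm_num)]
  split_ifs with hdvd
  · rw [hP, PowerSeries.coeff_trunc, if_pos (by omega)]
  · rfl

lemma mod3_square_add {a b : ℕ} (h : 3 ∣ (a*a + b*b)) : 3 ∣ a ∧ 3 ∣ b := by
  have h0 : ((↑(a*a + b*b) : ZMod 3)) = 0 := (ZMod.natCast_eq_zero_iff _ 3).mpr h
  have hcast : ((a : ZMod 3))*(a : ZMod 3) + (b : ZMod 3)*(b : ZMod 3) = 0 := by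
    push_cast at h0
    linear_combination h0
  have hdec : ∀ x y : ZMod 3, x*x + y*y = 0 → x = 0 ∧ y = 0 := by decide
  have hxy := hdec _ _ hcast
  exact ⟨(ZMod.natCast_eq_zero_iff a 3).mp hxy.1,
    (ZMod.natCast_eq_zero_iff b 3).mp hxy.2⟩

lemma thc_nine (m : ℕ) : thc (9*m) = thc m := by
  rcases Nat.eq_zero_or_pos m with rfl | hm
  · norm_num
  by_cases hsq : (Nat.sqrt m)^2 = m
  · set s := Nat.sqrt m with hs
    have h9 : 9*m = (3*s)^2 := by rw [← hsq]; ring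
    have hsq9 : Nat.sqrt (9*m) = 3*s := by rw [h9, Nat.sqrt_eq']
    rw [thc, thc, hsq9, if_pos h9.symm, if_pos hsq, if_neg (by omega), if_neg (by omega)]
    rw [pow_mul]
    norm_num
    exact Or.inl rfl
  · have hns9 : ¬ (Nat.sqrt (9*m))^2 = 9*m := by
      intro hcon
      set t := Nat.sqrt (9*m) with ht
      have h3t : 3 ∣ t := by
        have hd : 3 ∣ t*t := ⟨3*m, by rw [← pow_two, hcon]; ring⟩
        exact ((Nat.Prime.dvd_mul (by norm_num)).mp hd).elim id id
      obtain ⟨u, hu⟩ := h3t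
      have hmu : m = u^2 := by
        have h2 : 9*m = 9*u^2 := by rw [← hcon, hu]; ring
        omega
      apply hsq
      rw [hmu, Nat.sqrt_eq']
    rw [thc, thc, if_neg hns9, if_neg hsq]

lemma thc_three_not {j : ℕ} (h : ¬ 3 ∣ j) : thc (3*j) = 0 := by
  rw [thc, if_neg]
  intro hcon
  set t := Nat.sqrt (3*j) with ht
  have h3t : 3 ∣ t := by
    have hd : 3 ∣ t*t := ⟨j, by rw [← pow_two, hcon]⟩
    exact ((Nat.Prime.dvd_mul (by norm_num)).mp hd).elim id id
  obtain ⟨u, hu⟩ := h3t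
  apply h
  have h2 : 3*j = 9*u^2 := by rw [← hcon, hu]; ring
  omega

lemma thc_three (n : ℕ) : thc (3*n) = if 3 ∣ n then thc (n/3) else 0 := by
  split_ifs with hd
  · obtain ⟨m, rfl⟩ := hd
    rw [show 3*(3*m) = 9*m by ring, thc_nine]
    congr 1
    omega
  · exact thc_three_not hd

lemma coeff_Th_sq_3m {m : ℕ} (h : ¬ 3 ∣ m) :
    PowerSeries.coeff (R := R3) (3*m) (Th^2) = 0 := by
  rw [pow_two, PowerSeries.coeff_mul]
  refine Finset.sum_eq_zero fun p hp => ?_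
  have hps := Finset.HasAntidiagonal.mem_antidiagonal.mp hp
  by_cases h1 : thc p.1 = 0
  · rw [Th, PowerSeries.coeff_mk, PowerSeries.coeff_mk, h1, zero_mul]
  by_cases h2 : thc p.2 = 0
  · rw [Th, PowerSeries.coeff_mk, PowerSeries.coeff_mk, h2, mul_zero]
  exfalso
  have hsq1 : (Nat.sqrt p.1)^2 = p.1 := by
    by_contra hcon; exact h1 (by rw [thc, if_neg hcon])
  have hsq2 : (Nat.sqrt p.2)^2 = p.2 := by
    by_contra hcon; exact h2 (by rw [thc, if_neg hcon])
  have hdvd : 3 ∣ (Nat.sqrt p.1 * Nat.sqrt p.1 + Nat.sqrt p.2 * Nat.sqrt p.2) := by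
    rw [← pow_two, ← pow_two, hsq1, hsq2, hps]
    exact ⟨m, rfl⟩
  obtain ⟨⟨a', ha⟩, ⟨b', hb⟩⟩ := mod3_square_add hdvd
  apply h
  have e1 : p.1 = 9*(a'*a') := by rw [← hsq1, ha]; ring
  have e2 : p.2 = 9*(b'*b') := by rw [← hsq2, hb]; ring
  omega

lemma coeff_Th_sq_9m (m : ℕ) :
    PowerSeries.coeff (R := R3) (9*m) (Th^2) = PowerSeries.coeff (R := R3) m (Th^2) := by
  rw [pow_two, PowerSeries.coeff_mul, PowerSeries.coeff_mul]
  have hinj : Function.Injective (fun p : ℕ × ℕ => (9*p.1, 9*p.2)) := by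
    intro p q hpq
    simp only [Prod.mk.injEq] at hpq
    exact Prod.ext (by omega) (by omega)
  have hsub : (Finset.HasAntidiagonal.antidiagonal m).map ⟨_, hinj⟩ ⊆ Finset.HasAntidiagonal.antidiagonal (9*m) := by
    intro p hp
    obtain ⟨q, hq, rfl⟩ := Finset.mem_map.mp hp
    have := Finset.HasAntidiagonal.mem_antidiagonal.mp hq
    exact Finset.HasAntidiagonal.mem_antidiagonal.mpr (by simp; omega)
  have hvan : ∀ p ∈ Finset.HasAntidiagonal.antidiagonal (9*m),
      p ∉ (Finset.HasAntidiagonal.antidiagonal m).map ⟨_, hinj⟩ →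
      PowerSeries.coeff (R := R3) p.1 Th * PowerSeries.coeff (R := R3) p.2 Th = 0 := by
    intro p hp hnot
    have hps := Finset.HasAntidiagonal.mem_antidiagonal.mp hp
    rw [Th, PowerSeries.coeff_mk, PowerSeries.coeff_mk]
    by_cases h1 : thc p.1 = 0
    · rw [h1, zero_mul]
    by_cases h2 : thc p.2 = 0
    · rw [h2, mul_zero]
    exfalso
    have hsq1 : (Nat.sqrt p.1)^2 = p.1 := by
      by_contra hcon; exact h1 (by rw [thc, if_neg hcon])
    have hsq2 : (Nat.sqrt p.2)^2 = p.2 := by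
      by_contra hcon; exact h2 (by rw [thc, if_neg hcon])
    have hdvd : 3 ∣ (Nat.sqrt p.1 * Nat.sqrt p.1 + Nat.sqrt p.2 * Nat.sqrt p.2) := by
      rw [← pow_two, ← pow_two, hsq1, hsq2, hps]
      exact ⟨3*m, by ring⟩
    obtain ⟨⟨a', ha⟩, ⟨b', hb⟩⟩ := mod3_square_add hdvd
    have e1 : p.1 = 9*(a'*a') := by rw [← hsq1, ha]; ring
    have e2 : p.2 = 9*(b'*b') := by rw [← hsq2, hb]; ring
    apply hnot
    refine Finset.mem_map.mpr ⟨(a'*a', b'*b'), Finset.HasAntidiagonal.mem_antidiagonal.mpr (by omega), ?_⟩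
    simp only [Function.Embedding.coeFn_mk]
    exact Prod.ext (by omega) (by omega)
  rw [← Finset.sum_subset hsub hvan, Finset.sum_map]
  refine Finset.sum_congr rfl fun p hp => ?_
  simp only [Function.Embedding.coeFn_mk]
  rw [Th, PowerSeries.coeff_mk, PowerSeries.coeff_mk, PowerSeries.coeff_mk,
    PowerSeries.coeff_mk, thc_nine, thc_nine]

noncomputable def Bs : S3 := PowerSeries.mk fun n => PowerSeries.coeff (R := R3) (3*n) Fs

lemma Fs_mul_Th_cube : Fs * Th^3 = Th := by
  calc Fs * Th^3 = (Fs * Th^2) * Th := by ring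
    _ = Th := by rw [Fs_mul_Th_sq, one_mul]

lemma coeff_Th_cube (n : ℕ) :
    PowerSeries.coeff (R := R3) n (Th^3) = thc (3*n) := by
  rw [coeff_cube, thc_three]
  split_ifs with h
  · rw [Th, PowerSeries.coeff_mk]
  · rfl

lemma Bs_mul_Th : Bs * Th = Th^3 := by
  ext n
  have hmain := congrArg (PowerSeries.coeff (R := R3) (3*n)) Fs_mul_Th_cube
  rw [PowerSeries.coeff_mul] at hmain
  have hinj : Function.Injective (fun p : ℕ × ℕ => (3*p.1, 3*p.2)) := by
    intro p q hpq
    simp only [Prod.mk.injEq] at hpq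
    exact Prod.ext (by omega) (by omega)
  have hsub : (Finset.HasAntidiagonal.antidiagonal n).map ⟨_, hinj⟩ ⊆ Finset.HasAntidiagonal.antidiagonal (3*n) := by
    intro p hp
    obtain ⟨q, hq, rfl⟩ := Finset.mem_map.mp hp
    have := Finset.HasAntidiagonal.mem_antidiagonal.mp hq
    exact Finset.HasAntidiagonal.mem_antidiagonal.mpr (by simp; omega)
  have hvan : ∀ p ∈ Finset.HasAntidiagonal.antidiagonal (3*n),
      p ∉ (Finset.HasAntidiagonal.antidiagonal n).map ⟨_, hinj⟩ →
      PowerSeries.coeff (R := R3) p.1 Fs * PowerSeries.coeff (R := R3) p.2 (Th^3) = 0 := by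
    intro p hp hnot
    have hps := Finset.HasAntidiagonal.mem_antidiagonal.mp hp
    rw [coeff_cube]
    by_cases hdv : 3 ∣ p.2
    · exfalso
      apply hnot
      obtain ⟨b, hb⟩ := hdv
      have ha : 3 ∣ p.1 := by omega
      obtain ⟨a, hA⟩ := ha
      refine Finset.mem_map.mpr ⟨(a, b), Finset.HasAntidiagonal.mem_antidiagonal.mpr (by omega), ?_⟩
      simp only [Function.Embedding.coeFn_mk]
      exact Prod.ext (by omega) (by omega)
    · rw [if_neg hdv, mul_zero]
  rw [← Finset.sum_subset hsub hvan, Finset.sum_map] at hmain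
  simp only [Function.Embedding.coeFn_mk] at hmain
  have hterm : ∀ p ∈ Finset.HasAntidiagonal.antidiagonal n,
      PowerSeries.coeff (R := R3) ((fun p : ℕ × ℕ => (3*p.1, 3*p.2)) p).1 Fs *
        PowerSeries.coeff (R := R3) ((fun p : ℕ × ℕ => (3*p.1, 3*p.2)) p).2 (Th^3)
      = PowerSeries.coeff (R := R3) p.1 Bs * PowerSeries.coeff (R := R3) p.2 Th := by
    intro p hp
    simp only
    rw [coeff_cube, if_pos ⟨p.2, rfl⟩, Bs, Th, PowerSeries.coeff_mk, PowerSeries.coeff_mk,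
      PowerSeries.coeff_mk]
    congr 2
    omega
  rw [Finset.sum_congr rfl hterm] at hmain
  rw [PowerSeries.coeff_mul, hmain, coeff_Th_cube, Th, PowerSeries.coeff_mk]

lemma Bs_eq_Th_sq : Bs = Th^2 := by
  calc Bs = Bs * (Fs * Th^2) := by rw [Fs_mul_Th_sq, mul_one]
    _ = (Bs * Th) * Th * Fs := by ring
    _ = Th^3 * Th * Fs := by rw [Bs_mul_Th]
    _ = Th^2 * (Fs * Th^2) := by ring
    _ = Th^2 := by rw [Fs_mul_Th_sq, mul_one]

lemma coeff_Fs_nine {m : ℕ} (h : ¬ 3 ∣ m) : PowerSeries.coeff (R := R3) (9*m) Fs = 0 := by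
  rw [show 9*m = 3*(3*m) from by ring]
  have h1 : PowerSeries.coeff (R := R3) (3*(3*m)) Fs = PowerSeries.coeff (R := R3) (3*m) Bs := by
    rw [Bs, PowerSeries.coeff_mk]
  rw [h1, Bs_eq_Th_sq, coeff_Th_sq_3m h]

lemma coeff_Fs_27 (t : ℕ) : PowerSeries.coeff (R := R3) (27*t) Fs = PowerSeries.coeff (R := R3) (3*t) Fs := by
  have h1 : PowerSeries.coeff (R := R3) (27*t) Fs = PowerSeries.coeff (R := R3) (9*t) Bs := by
    rw [Bs, PowerSeries.coeff_mk, show 3*(9*t) = 27*t from by ring]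
  have h2 : PowerSeries.coeff (R := R3) (3*t) Fs = PowerSeries.coeff (R := R3) t Bs := by
    rw [Bs, PowerSeries.coeff_mk]
  rw [h1, h2, Bs_eq_Th_sq, coeff_Th_sq_9m]

lemma key (α : ℕ) : ∀ m : ℕ, ¬ 3 ∣ m → PowerSeries.coeff (R := R3) (9^(α+1) * m) Fs = 0 := by
  induction α with
  | zero =>
    intro m hm
    rw [show 9^(0+1) * m = 9*m by ring]
    exact coeff_Fs_nine hm
  | succ α ih =>
    intro m hm
    rw [show 9^(α+1+1) * m = 27*(3*(9^α * m)) by ring]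
    rw [coeff_Fs_27]
    rw [show 3*(3*(9^α * m)) = 9^(α+1) * m by ring]
    exact ih m hm

lemma colorPart_cast (x : ℕ) : ((colorPart 2 4 x : ℤ) : R3) = PowerSeries.coeff (R := R3) x Fs := by
  rw [Fs, PowerSeries.coeff_mk]

lemma final (α m : ℕ) (hm : ¬ 3 ∣ m) :
    colorPart 2 4 (9^(α+1) * m) ≡ 0 [ZMOD 3] := by
  have h0 : ((colorPart 2 4 (9^(α+1) * m) : ℤ) : ZMod 3) = 0 := by
    rw [colorPart_cast, key α m hm]
  have hdvd : (3:ℤ) ∣ colorPart 2 4 (9^(α+1) * m) := by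
    exact_mod_cast (ZMod.intCast_zmod_eq_zero_iff_dvd _ 3).mp h0
  exact (Int.modEq_zero_iff_dvd).mpr hdvd
end St

theorem stmt18 (α n : ℕ) :
    colorPart 2 4 (3 ^ (2 * α + 3) * n + 3 ^ (2 * (α + 1))) ≡ 0 [ZMOD 3] ∧
    colorPart 2 4 (3 ^ (2 * α + 3) * n + 2 * 3 ^ (2 * (α + 1))) ≡ 0 [ZMOD 3] := by
  constructor
  · have h : 3 ^ (2 * α + 3) * n + 3 ^ (2 * (α + 1)) = 9^(α+1) * (3*n+1) := by
      rw [show (9:ℕ) = 3^2 from rfl, ← pow_mul]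
      rw [show 2*α+3 = 2*(α+1)+1 from by omega, pow_succ]
      ring
    rw [h]
    exact St.final α (3*n+1) (by omega)
  · have h : 3 ^ (2 * α + 3) * n + 2 * 3 ^ (2 * (α + 1)) = 9^(α+1) * (3*n+2) := by
      rw [show (9:ℕ) = 3^2 from rfl, ← pow_mul]
      rw [show 2*α+3 = 2*(α+1)+1 from by omega, pow_succ]
      ring
    rw [h]
    exact St.final α (3*n+2) (by omega)
end

section
/- Let p be a prime and λ a positive integer. Let α_1,…,α_j, β_1,…,β_k be positive integers, let γ_1,…,γ_j, δ_1,…,δ_k be positive integers, and let a_1,…,a_j, b_1,…,b_k be positive integers. Define integer sequences A(n) and B(n) as the coefficients of q^n in the formal power series ∏_{i=1}^{j} f_{α_i}^{γ_i} / ∏_{i=1}^{k} f_{β_i}^{δ_i} and ∏_{i=1}^{j} f_{α_i}^{a_i p^λ + γ_i} / ∏_{i=1}^{k} f_{β_i}^{b_i p^λ + δ_i}, respectively. If C is an integer with 1 ≤ C ≤ p^λ − 1 and A(p^λ n + C) ≡ 0 (mod p) for all n ≥ 0, then B(p^λ n + C) ≡ 0 (mod p) for all n ≥ 0. -/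
/-- `etaProd m` is the formal power series `f_m = ∏_{n ≥ 1} (1 - q^{m n})` over `ℤ`.
Since the factors with `m * n > N` do not affect the coefficient of `q^N`, the coefficient
of `q^N` equals the corresponding coefficient of the finite product over `1 ≤ n ≤ N + 1`. -/
noncomputable def etaProd (m : ℕ) : PowerSeries ℤ :=
  PowerSeries.mk fun N =>
    PowerSeries.coeff (R := ℤ) N
      (∏ n ∈ Finset.range (N + 1), (1 - PowerSeries.X ^ (m * (n + 1))))

lemma coeff_pow_p_aux (p : ℕ) [Fact p.Prime] (V : PowerSeries (ZMod p)) (t : ℕ) :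
    PowerSeries.coeff (R := ZMod p) t (V ^ p) =
      if p ∣ t then PowerSeries.coeff (R := ZMod p) (t / p) V else 0 := by
  have hp : p.Prime := Fact.out
  set T : Polynomial (ZMod p) := PowerSeries.trunc (t + 1) V with hT
  have hdvd : (PowerSeries.X : PowerSeries (ZMod p)) ^ (t + 1) ∣
      V - (T : PowerSeries (ZMod p)) := by
    rw [PowerSeries.X_pow_dvd_iff]
    intro m hm
    rw [map_sub, Polynomial.coeff_coe, hT, PowerSeries.coeff_trunc, if_pos hm, sub_self]
  have hdvd2 : (PowerSeries.X : PowerSeries (ZMod p)) ^ (t + 1) ∣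
      V ^ p - (T : PowerSeries (ZMod p)) ^ p :=
    hdvd.trans (sub_dvd_pow_sub_pow V (T : PowerSeries (ZMod p)) p)
  have hceq : PowerSeries.coeff (R := ZMod p) t (V ^ p) =
      PowerSeries.coeff (R := ZMod p) t ((T : PowerSeries (ZMod p)) ^ p) := by
    have := (PowerSeries.X_pow_dvd_iff.mp hdvd2) t (Nat.lt_succ_self t)
    rw [map_sub] at this
    exact sub_eq_zero.mp this
  have hfrob : T ^ p = Polynomial.expand (ZMod p) p T := by
    haveI : ExpChar (ZMod p) p := ExpChar.prime hp
    have h1 := Polynomial.map_frobenius_expand (p := p) (f := T)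
    rw [ZMod.frobenius_zmod, Polynomial.map_id] at h1
    exact h1.symm
  rw [hceq, ← Polynomial.coe_pow, hfrob, Polynomial.coeff_coe,
    Polynomial.coeff_expand hp.pos]
  by_cases h : p ∣ t
  · rw [if_pos h, if_pos h, hT, PowerSeries.coeff_trunc,
      if_pos (Nat.lt_succ_of_le (Nat.div_le_self t p))]
  · rw [if_neg h, if_neg h]

lemma coeff_pow_pow_aux (p : ℕ) [Fact p.Prime] (lam : ℕ) (V : PowerSeries (ZMod p)) (t : ℕ) :
    PowerSeries.coeff (R := ZMod p) t (V ^ p ^ lam) =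
      if p ^ lam ∣ t then PowerSeries.coeff (R := ZMod p) (t / p ^ lam) V else 0 := by
  induction lam generalizing t with
  | zero => simp
  | succ l ih =>
    have hV : V ^ p ^ (l + 1) = (V ^ p ^ l) ^ p := by rw [← pow_mul, pow_succ]
    rw [hV, coeff_pow_p_aux]
    by_cases h : p ∣ t
    · rw [if_pos h, ih]
      have hiff : p ^ l ∣ t / p ↔ p ^ (l + 1) ∣ t := by
        rw [Nat.dvd_div_iff_mul_dvd h, ← pow_succ']
      by_cases h2 : p ^ l ∣ t / p
      · rw [if_pos h2, if_pos (hiff.mp h2), Nat.div_div_eq_div_mul, ← pow_succ']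
      · rw [if_neg h2, if_neg (fun hc => h2 (hiff.mpr hc))]
    · rw [if_neg h, if_neg (fun hc => h (dvd_trans (dvd_pow_self p (Nat.succ_ne_zero l)) hc))]

theorem stmt19 (p : ℕ) (hp : p.Prime) (lam : ℕ) (hlam : 0 < lam)
    (J K : ℕ) (α γ a : Fin J → ℕ) (β δ b : Fin K → ℕ)
    (hα : ∀ i, 0 < α i) (hγ : ∀ i, 0 < γ i) (ha : ∀ i, 0 < a i)
    (hβ : ∀ i, 0 < β i) (hδ : ∀ i, 0 < δ i) (hb : ∀ i, 0 < b i)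
    (A B : ℕ → ℤ)
    (hA : ∀ n, A n = PowerSeries.coeff (R := ℤ) n
      ((∏ i, (etaProd (α i)) ^ (γ i)) *
        ∏ i, (PowerSeries.invOfUnit (etaProd (β i)) 1) ^ (δ i)))
    (hB : ∀ n, B n = PowerSeries.coeff (R := ℤ) n
      ((∏ i, (etaProd (α i)) ^ (a i * p ^ lam + γ i)) *
        ∏ i, (PowerSeries.invOfUnit (etaProd (β i)) 1) ^ (b i * p ^ lam + δ i)))
    (C : ℕ) (hC1 : 1 ≤ C) (hC2 : C ≤ p ^ lam - 1)
    (hAcong : ∀ n : ℕ, A (p ^ lam * n + C) ≡ 0 [ZMOD p]) :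
    ∀ n : ℕ, B (p ^ lam * n + C) ≡ 0 [ZMOD p] := by
  haveI : Fact p.Prime := ⟨hp⟩
  have hppos : 0 < p ^ lam := Nat.pow_pos hp.pos
  have hClt : C < p ^ lam := lt_of_le_of_lt hC2 (Nat.sub_lt hppos Nat.one_pos)
  -- the algebraic identity over ℤ
  set PA : PowerSeries ℤ := (∏ i, (etaProd (α i)) ^ (γ i)) *
        ∏ i, (PowerSeries.invOfUnit (etaProd (β i)) 1) ^ (δ i) with hPA
  set W : PowerSeries ℤ := (∏ i, (etaProd (α i)) ^ (a i)) *
        ∏ i, (PowerSeries.invOfUnit (etaProd (β i)) 1) ^ (b i) with hW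
  have hident : ((∏ i, (etaProd (α i)) ^ (a i * p ^ lam + γ i)) *
        ∏ i, (PowerSeries.invOfUnit (etaProd (β i)) 1) ^ (b i * p ^ lam + δ i)) =
      PA * W ^ (p ^ lam) := by
    rw [hPA, hW]
    simp only [pow_add, pow_mul, Finset.prod_mul_distrib, Finset.prod_pow, mul_pow]
    ring
  -- cast coefficients to ZMod p
  have hAcast : ∀ m : ℕ, ((A (p ^ lam * m + C) : ℤ) : ZMod p) = 0 := by
    intro m
    exact (ZMod.intCast_zmod_eq_zero_iff_dvd _ p).mpr (Int.modEq_zero_iff_dvd.mp (hAcong m))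
  intro n
  rw [Int.modEq_zero_iff_dvd, ← ZMod.intCast_zmod_eq_zero_iff_dvd, hB, hident]
  have hmap : (((PowerSeries.coeff (R := ℤ) (p ^ lam * n + C)) (PA * W ^ p ^ lam) : ℤ) : ZMod p) =
      PowerSeries.coeff (R := ZMod p) (p ^ lam * n + C)
        ((PowerSeries.map (Int.castRingHom (ZMod p)) PA) *
          (PowerSeries.map (Int.castRingHom (ZMod p)) W) ^ p ^ lam) := by
    rw [← map_pow, ← map_mul, PowerSeries.coeff_map]
    rfl
  rw [hmap, PowerSeries.coeff_mul]
  apply Finset.sum_eq_zero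
  intro x hx
  rw [Finset.HasAntidiagonal.mem_antidiagonal] at hx
  by_cases hv : p ^ lam ∣ x.2
  · obtain ⟨s, hs⟩ := hv
    have hsle : s ≤ n := by
      by_contra hsn
      push_neg at hsn
      have h1 : p ^ lam * n + p ^ lam ≤ p ^ lam * s := by
        calc p ^ lam * n + p ^ lam = p ^ lam * (n + 1) := by ring
        _ ≤ p ^ lam * s := Nat.mul_le_mul_left _ hsn
      have hbad : x.2 < x.2 := by
        calc x.2 ≤ x.1 + x.2 := Nat.le_add_left _ _
        _ = p ^ lam * n + C := hx
        _ < p ^ lam * n + p ^ lam := by omega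
        _ ≤ p ^ lam * s := h1
        _ = x.2 := hs.symm
      exact absurd hbad (lt_irrefl _)
    have hx1 : x.1 = p ^ lam * (n - s) + C := by
      have h3 : p ^ lam * (n - s) + p ^ lam * s = p ^ lam * n := by
        rw [← Nat.mul_add, Nat.sub_add_cancel hsle]
      omega
    have hz : PowerSeries.coeff (R := ZMod p) x.1
        (PowerSeries.map (Int.castRingHom (ZMod p)) PA) = 0 := by
      rw [PowerSeries.coeff_map]
      have h4 := hAcast (n - s)
      rw [hA] at h4
      rw [hx1]
      exact h4
    rw [hz, zero_mul]
  · rw [coeff_pow_pow_aux, if_neg hv, mul_zero]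
end
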